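/- Let λ_0, λ_1 > 0 with e^{-λ_0} + e^{-λ_1} ≤ 1, and let p, q ∈ (0,1). Then for μ_{p,q}-almost every ω ∈ Σ, lim_{n→∞} [log ν_{p,q}(π(C_n(ω))) / log diam π(C_n(ω))] = ((2-q)H(p) + pH(q)) / (2pλ_1 + (2-p-q)λ_0), where C_n(ω) = {τ ∈ Σ : τ_k = ω_k for all k ≤ n}. -/

import Mathlib

open Filter Set MeasureTheory
open scoped ENNReal

/-- The metric `d(ω,τ) = 2^{-min{n : ω_n ≠ τ_n}}` on `Σ = {0,1}^ℕ`
(coordinate `i : ℕ` represents the paper's `ω_{i+1}`). -/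
noncomputable instance : MetricSpace (ℕ → Fin 2) := PiNat.metricSpace

/-- The Borel σ-algebra on `Σ`. -/
instance : MeasurableSpace (ℕ → Fin 2) := borel _

instance : BorelSpace (ℕ → Fin 2) := ⟨rfl⟩

/-- The cylinder `[ω_1 ⋯ ω_n] = {τ ∈ Σ : τ_k = ω_k for all k ≤ n}` (0-indexed). -/
def cyl (ω : ℕ → Fin 2) (n : ℕ) : Set (ℕ → Fin 2) := {τ | ∀ k < n, τ k = ω k}

/-- The value `∏_{k=1}^{⌈n/2⌉} p_{ω_{2k-1}} ⬝ ∏_{k=1}^{⌊n/2⌋} p_{ω_k ω_{2k}}` prescribed for the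
measure of the cylinder `[ω_1 ⋯ ω_n]`, where `p_0 = 1-p`, `p_1 = p`, `p_{00} = 1-p`,
`p_{01} = p`, `p_{10} = 1-q`, `p_{11} = q` (0-indexed: the paper's odd positions
`2k-1` become `2j` and the pairs `(k, 2k)` become `(j, 2j+1)`). -/
noncomputable def cylMass (p q : ℝ) (ω : ℕ → Fin 2) (n : ℕ) : ℝ :=
  (∏ k ∈ Finset.range ((n + 1) / 2), (if ω (2 * k) = 1 then p else 1 - p)) *
  (∏ k ∈ Finset.range (n / 2),
    (if ω k = 1 then (if ω (2 * k + 1) = 1 then q else 1 - q)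
     else (if ω (2 * k + 1) = 1 then p else 1 - p)))

/-- The maps `f_0(x) = e^{-λ₀} x` and `f_1(x) = e^{-λ₁} x + 1 - e^{-λ₁}`. -/
noncomputable def fdig (lam0 lam1 : ℝ) : Fin 2 → ℝ → ℝ := fun i x =>
  if i = 1 then Real.exp (-lam1) * x + 1 - Real.exp (-lam1) else Real.exp (-lam0) * x

/-- `f_{ω_1} ∘ f_{ω_2} ∘ ⋯ ∘ f_{ω_n}` (0-indexed: `ω i` is the paper's `ω_{i+1}`). -/
noncomputable def prefixIter (lam0 lam1 : ℝ) (ω : ℕ → Fin 2) : ℕ → ℝ → ℝ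
  | 0 => fun x => x
  | n + 1 => fun x => prefixIter lam0 lam1 ω n (fdig lam0 lam1 (ω n) x)

/-- The coding map `π(ω) = lim_{n→∞} f_{ω_1} ∘ f_{ω_2} ∘ ⋯ ∘ f_{ω_n}(0)`. -/
noncomputable def piMap (lam0 lam1 : ℝ) (ω : ℕ → Fin 2) : ℝ :=
  limUnder atTop (fun n => prefixIter lam0 lam1 ω n 0)

/-- The entropy function `H(p) = -p log p - (1-p) log(1-p)` (with `H(0) = H(1) = 0`,
which holds automatically since `Real.log 0 = 0`). -/
noncomputable def Hent (p : ℝ) : ℝ := -p * Real.log p - (1 - p) * Real.log (1 - p)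

/-! ### Combinatorial core -/

def P1 (p : ℝ) (x : Fin 2) : ℝ := if x = 1 then p else 1 - p
def P2 (p q : ℝ) (x y : Fin 2) : ℝ :=
  if x = 1 then (if y = 1 then q else 1 - q) else (if y = 1 then p else 1 - p)

def par (j : ℕ) : ℕ := (j - 1) / 2

noncomputable def Ffac (p q : ℝ) (j : ℕ) (ω : ℕ → Fin 2) : ℝ :=
  if Even j then P1 p (ω j) else P2 p q (ω (par j)) (ω j)

lemma par_lt {j : ℕ} (h : ¬ Even j) : par j < j := by
  rcases Nat.even_or_odd j with h'|h'
  · exact absurd h' h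
  · rcases h' with ⟨m, rfl⟩; simp [par]; omega

lemma cylMass_eq_prod (p q : ℝ) (ω : ℕ → Fin 2) (n : ℕ) :
    cylMass p q ω n = ∏ j ∈ Finset.range n, Ffac p q j ω := by
  induction n with
  | zero => simp [cylMass]
  | succ n ih =>
    rw [Finset.prod_range_succ, ← ih]
    rcases Nat.even_or_odd n with ⟨m, rfl⟩ | ⟨m, rfl⟩
    · have h1 : (m + m + 1 + 1) / 2 = m + 1 := by omega
      have h2 : (m + m + 1) / 2 = m := by omega
      have h4 : (m + m) / 2 = m := by omega
      unfold cylMass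
      rw [h1, h2, h4, Finset.prod_range_succ]
      have : Even (m + m) := ⟨m, rfl⟩
      rw [Ffac, if_pos this]
      have h5 : 2 * m = m + m := by omega
      simp only [P1, h5]
      ring
    · have h1 : (2 * m + 1 + 1 + 1) / 2 = m + 1 := by omega
      have h2 : (2 * m + 1 + 1) / 2 = m + 1 := by omega
      have h4 : (2 * m + 1) / 2 = m := by omega
      unfold cylMass
      rw [h1, h2, h4, Finset.prod_range_succ]
      have hne : ¬ Even (2 * m + 1) := by simp [Nat.even_add_one, parity_simps]
      rw [Ffac, if_neg hne]
      have h5 : par (2 * m + 1) = m := by simp [par]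
      simp only [P2, h5]
      rw [Finset.prod_range_succ (fun x => if ω x = 1 then (if ω (2 * x + 1) = 1 then q else 1 - q)
        else (if ω (2 * x + 1) = 1 then p else 1 - p)) m]
      ring

/-- The combinatorial expectation operator: integrate out coordinates `N-1, ..., 0`. -/
noncomputable def EN (p q : ℝ) : ℕ → ((ℕ → Fin 2) → ℝ) → ℝ
  | 0, f => f (fun _ => 0)
  | (N+1), f => EN p q N (fun ω => ∑ x : Fin 2,
      Ffac p q N (Function.update ω N x) * f (Function.update ω N x))

section ENlem
variable {p q : ℝ}

lemma EN_congr {N : ℕ} {f g : (ℕ → Fin 2) → ℝ} (h : ∀ ω, f ω = g ω) :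
    EN p q N f = EN p q N g := by
  have : f = g := funext h
  rw [this]

lemma Ffac_update_sum (hp : p ∈ Set.Ioo (0:ℝ) 1) (hq : q ∈ Set.Ioo (0:ℝ) 1)
    (N : ℕ) (ω : ℕ → Fin 2) :
    ∑ x : Fin 2, Ffac p q N (Function.update ω N x) = 1 := by
  rw [Fin.sum_univ_two]
  unfold Ffac
  by_cases h : Even N
  · simp only [if_pos h, Function.update_self, P1]
    norm_num
  · have hpar : par N ≠ N := Nat.ne_of_lt (par_lt h)
    simp only [if_neg h, Function.update_self, Function.update_of_ne hpar, P2]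
    by_cases h1 : ω (par N) = 1 <;> simp [h1] <;> norm_num

lemma Ffac_nonneg (hp : p ∈ Set.Ioo (0:ℝ) 1) (hq : q ∈ Set.Ioo (0:ℝ) 1)
    (j : ℕ) (ω : ℕ → Fin 2) : 0 ≤ Ffac p q j ω := by
  obtain ⟨hp0, hp1⟩ := hp; obtain ⟨hq0, hq1⟩ := hq
  unfold Ffac P1 P2
  split_ifs <;> linarith

lemma EN_add (N : ℕ) (f g : (ℕ → Fin 2) → ℝ) :
    EN p q N (fun ω => f ω + g ω) = EN p q N f + EN p q N g := by
  induction N generalizing f g with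
  | zero => simp [EN]
  | succ N ih =>
    show EN p q N _ = EN p q N _ + EN p q N _
    rw [← ih]
    apply EN_congr
    intro ω
    rw [← Finset.sum_add_distrib]
    congr 1; funext x; ring

lemma EN_const_mul (N : ℕ) (c : ℝ) (f : (ℕ → Fin 2) → ℝ) :
    EN p q N (fun ω => c * f ω) = c * EN p q N f := by
  induction N generalizing f with
  | zero => simp [EN]
  | succ N ih =>
    show EN p q N _ = c * EN p q N _
    rw [← ih]
    apply EN_congr
    intro ω
    rw [Finset.mul_sum]
    congr 1; funext x; ring

lemma EN_peel (N : ℕ) (f : (ℕ → Fin 2) → ℝ) :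
    EN p q (N+1) f = EN p q N (fun ω => ∑ x : Fin 2,
      Ffac p q N (Function.update ω N x) * f (Function.update ω N x)) := rfl

lemma EN_const (hp : p ∈ Set.Ioo (0:ℝ) 1) (hq : q ∈ Set.Ioo (0:ℝ) 1)
    (N : ℕ) (c : ℝ) : EN p q N (fun _ => c) = c := by
  induction N with
  | zero => simp [EN]
  | succ N ih =>
    rw [EN_peel]
    have h : ∀ ω, (∑ x : Fin 2, Ffac p q N (Function.update ω N x) * c) = c := by
      intro ω; rw [← Finset.sum_mul, Ffac_update_sum hp hq, one_mul]
    rw [EN_congr h]; exact ih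

lemma EN_zero (N : ℕ) : EN p q N (fun _ => (0:ℝ)) = 0 := by
  have h := EN_const_mul (p := p) (q := q) N 0 (fun _ => (1:ℝ))
  simpa using h

lemma EN_mono (hp : p ∈ Set.Ioo (0:ℝ) 1) (hq : q ∈ Set.Ioo (0:ℝ) 1)
    {N : ℕ} {f g : (ℕ → Fin 2) → ℝ} (h : ∀ ω, f ω ≤ g ω) :
    EN p q N f ≤ EN p q N g := by
  induction N generalizing f g with
  | zero => exact h _
  | succ N ih =>
    apply ih
    intro ω
    apply Finset.sum_le_sum
    intro x _
    exact mul_le_mul_of_nonneg_left (h _) (Ffac_nonneg hp hq _ _)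

lemma EN_abs_le (hp : p ∈ Set.Ioo (0:ℝ) 1) (hq : q ∈ Set.Ioo (0:ℝ) 1)
    {N : ℕ} {f : (ℕ → Fin 2) → ℝ} {B : ℝ} (h : ∀ ω, |f ω| ≤ B) :
    |EN p q N f| ≤ B := by
  rw [abs_le]
  constructor
  · calc -B = EN p q N (fun _ => -B) := (EN_const hp hq N (-B)).symm
      _ ≤ EN p q N f := EN_mono hp hq (fun ω => (abs_le.1 (h ω)).1)
  · calc EN p q N f ≤ EN p q N (fun _ => B) := EN_mono hp hq (fun ω => (abs_le.1 (h ω)).2)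
      _ = B := EN_const hp hq N B

lemma EN_sum {ι : Type*} (s : Finset ι) (f : ι → (ℕ → Fin 2) → ℝ) (N : ℕ) :
    EN p q N (fun ω => ∑ k ∈ s, f k ω) = ∑ k ∈ s, EN p q N (f k) := by
  classical
  induction s using Finset.induction with
  | empty => simp only [Finset.sum_empty]; exact EN_zero N
  | insert _ _ hne ih =>
    rw [Finset.sum_insert hne, ← ih, ← EN_add]
    apply EN_congr; intro ω; rw [Finset.sum_insert hne]

/-- `f` depends only on coordinates in `A`. -/
def ALoc (A : Finset ℕ) (f : (ℕ → Fin 2) → ℝ) : Prop :=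
  ∀ ω ω', (∀ k ∈ A, ω k = ω' k) → f ω = f ω'

def NLoc (N : ℕ) (f : (ℕ → Fin 2) → ℝ) : Prop :=
  ∀ ω ω', (∀ k < N, ω k = ω' k) → f ω = f ω'

lemma ALoc.nloc {A : Finset ℕ} {f} {N : ℕ} (hA : A ⊆ Finset.range N) (h : ALoc A f) :
    NLoc N f := fun ω ω' hk => h ω ω' (fun k hkA => hk k (Finset.mem_range.1 (hA hkA)))

lemma EN_consistent (hp : p ∈ Set.Ioo (0:ℝ) 1) (hq : q ∈ Set.Ioo (0:ℝ) 1)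
    {N : ℕ} {f : (ℕ → Fin 2) → ℝ} (hf : NLoc N f) :
    EN p q (N+1) f = EN p q N f := by
  rw [EN_peel]
  apply EN_congr
  intro ω
  have hfeq : ∀ x : Fin 2, f (Function.update ω N x) = f ω := by
    intro x
    apply hf
    intro k hk
    exact Function.update_of_ne (Nat.ne_of_lt hk) _ _
  calc ∑ x : Fin 2, Ffac p q N (Function.update ω N x) * f (Function.update ω N x)
      = ∑ x : Fin 2, Ffac p q N (Function.update ω N x) * f ω := by
        congr 1; funext x; rw [hfeq]
    _ = (∑ x : Fin 2, Ffac p q N (Function.update ω N x)) * f ω := by rw [Finset.sum_mul]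
    _ = f ω := by rw [Ffac_update_sum hp hq, one_mul]

lemma EN_of_nloc (hp : p ∈ Set.Ioo (0:ℝ) 1) (hq : q ∈ Set.Ioo (0:ℝ) 1)
    {n : ℕ} {f : (ℕ → Fin 2) → ℝ} (hf : NLoc n f) :
    ∀ N : ℕ, n ≤ N → EN p q N f = EN p q n f := by
  intro N
  induction N with
  | zero => intro hN; obtain rfl : n = 0 := Nat.le_zero.mp hN; rfl
  | succ N ih =>
    intro hN
    rcases Nat.lt_or_ge n (N+1) with h | h
    · have h' : n ≤ N := by omega
      rw [EN_consistent hp hq (fun ω ω' hk => hf ω ω' (fun k hkn => hk k (lt_of_lt_of_le hkn h'))), ih h']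
    · have h2 : n = N + 1 := le_antisymm hN h
      rw [h2]
end ENlem

section Stage2
variable {p q : ℝ}

lemma ALoc_of_subset {A B : Finset ℕ} {f} (hAB : A ⊆ B) (h : ALoc A f) : ALoc B f :=
  fun ω ω' hk => h ω ω' (fun k hkA => hk k (hAB hkA))

def Anc (A : Finset ℕ) : Prop := ∀ j ∈ A, ¬ Even j → par j ∈ A

theorem EN_mul_indep (hp : p ∈ Set.Ioo (0:ℝ) 1) (hq : q ∈ Set.Ioo (0:ℝ) 1) :
    ∀ (N : ℕ) (A B : Finset ℕ) (f g : (ℕ → Fin 2) → ℝ), Anc A → Anc B → Disjoint A B →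
    A ⊆ Finset.range N → B ⊆ Finset.range N → ALoc A f → ALoc B g →
    EN p q N (fun ω => f ω * g ω) = EN p q N f * EN p q N g := by
  intro N
  induction N with
  | zero => intro A B f g _ _ _ _ _ _ _; rfl
  | succ N ih =>
    intro A B f g hA hB hAB hAN hBN hf hg
    by_cases hNA : N ∈ A
    · have hNB : N ∉ B := fun h => (Finset.disjoint_left.1 hAB hNA) h
      have hgupd : ∀ ω (x : Fin 2), g (Function.update ω N x) = g ω := by
        intro ω x
        apply hg
        intro k hk
        have hkN : k ≠ N := by rintro rfl; exact hNB hk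
        exact Function.update_of_ne hkN _ _
      set f' : (ℕ → Fin 2) → ℝ := fun ω => ∑ x : Fin 2,
        Ffac p q N (Function.update ω N x) * f (Function.update ω N x) with hf'
      have step1 : EN p q (N+1) (fun ω => f ω * g ω) = EN p q N (fun ω => f' ω * g ω) := by
        rw [EN_peel]
        apply EN_congr
        intro ω
        rw [hf', Finset.sum_mul]
        congr 1; funext x
        rw [hgupd]; ring
      have hBN' : B ⊆ Finset.range N := by
        intro k hk
        have h1 := Finset.mem_range.1 (hBN hk)
        have h2 : k ≠ N := fun h => hNB (h ▸ hk)
        exact Finset.mem_range.2 (by omega)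
      have hAN' : A.erase N ⊆ Finset.range N := by
        intro k hk
        rw [Finset.mem_erase] at hk
        have := Finset.mem_range.1 (hAN hk.2)
        exact Finset.mem_range.2 (by omega)
      have hA' : Anc (A.erase N) := by
        intro j hj hodd
        rw [Finset.mem_erase] at hj
        have hpj : par j ∈ A := hA j hj.2 hodd
        have hjN : j < N + 1 := Finset.mem_range.1 (hAN hj.2)
        have : par j < N := lt_of_lt_of_le (par_lt hodd) (by omega)
        exact Finset.mem_erase.2 ⟨Nat.ne_of_lt this, hpj⟩
      have hf'loc : ALoc (A.erase N) f' := by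
        intro ω ω' hk
        rw [hf']
        refine Finset.sum_congr rfl (fun x _ => ?_)
        have e1 : Ffac p q N (Function.update ω N x) = Ffac p q N (Function.update ω' N x) := by
          unfold Ffac
          by_cases hev : Even N
          · simp [hev, Function.update_self]
          · have hne : par N ≠ N := Nat.ne_of_lt (par_lt hev)
            have hpN : par N ∈ A := hA N hNA hev
            have hmem : par N ∈ A.erase N := Finset.mem_erase.2 ⟨hne, hpN⟩
            simp [hev, Function.update_self, Function.update_of_ne hne, hk _ hmem]
        have e2 : f (Function.update ω N x) = f (Function.update ω' N x) := by
          apply hf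
          intro k hkA
          by_cases hkN : k = N
          · subst hkN; simp [Function.update_self]
          · rw [Function.update_of_ne hkN, Function.update_of_ne hkN]
            exact hk k (Finset.mem_erase.2 ⟨hkN, hkA⟩)
        rw [e1, e2]
      have hgN : NLoc N g := ALoc.nloc hBN' hg
      have step2 : EN p q (N+1) g = EN p q N g := EN_consistent hp hq hgN
      have step3 : EN p q (N+1) f = EN p q N f' := rfl
      rw [step1, step2, step3]
      exact ih (A.erase N) B f' g hA' hB (Finset.disjoint_of_subset_left (Finset.erase_subset _ _) hAB)
        hAN' hBN' hf'loc hg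
    · by_cases hNB : N ∈ B
      · have hfupd : ∀ ω (x : Fin 2), f (Function.update ω N x) = f ω := by
          intro ω x
          apply hf
          intro k hk
          have hkN : k ≠ N := by rintro rfl; exact hNA hk
          exact Function.update_of_ne hkN _ _
        set g' : (ℕ → Fin 2) → ℝ := fun ω => ∑ x : Fin 2,
          Ffac p q N (Function.update ω N x) * g (Function.update ω N x) with hg'
        have step1 : EN p q (N+1) (fun ω => f ω * g ω) = EN p q N (fun ω => f ω * g' ω) := by
          rw [EN_peel]
          apply EN_congr
          intro ω
          rw [hg', Finset.mul_sum]
          congr 1; funext x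
          rw [hfupd]; ring
        have hAN' : A ⊆ Finset.range N := by
          intro k hk
          have h1 := Finset.mem_range.1 (hAN hk)
          have h2 : k ≠ N := fun h => hNA (h ▸ hk)
          exact Finset.mem_range.2 (by omega)
        have hBN' : B.erase N ⊆ Finset.range N := by
          intro k hk
          rw [Finset.mem_erase] at hk
          have := Finset.mem_range.1 (hBN hk.2)
          exact Finset.mem_range.2 (by omega)
        have hB' : Anc (B.erase N) := by
          intro j hj hodd
          rw [Finset.mem_erase] at hj
          have hpj : par j ∈ B := hB j hj.2 hodd
          have hjN : j < N + 1 := Finset.mem_range.1 (hBN hj.2)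
          have : par j < N := lt_of_lt_of_le (par_lt hodd) (by omega)
          exact Finset.mem_erase.2 ⟨Nat.ne_of_lt this, hpj⟩
        have hg'loc : ALoc (B.erase N) g' := by
          intro ω ω' hk
          rw [hg']
          refine Finset.sum_congr rfl (fun x _ => ?_)
          have e1 : Ffac p q N (Function.update ω N x) = Ffac p q N (Function.update ω' N x) := by
            unfold Ffac
            by_cases hev : Even N
            · simp [hev, Function.update_self]
            · have hne : par N ≠ N := Nat.ne_of_lt (par_lt hev)
              have hpN : par N ∈ B := hB N hNB hev
              have hmem : par N ∈ B.erase N := Finset.mem_erase.2 ⟨hne, hpN⟩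
              simp [hev, Function.update_self, Function.update_of_ne hne, hk _ hmem]
          have e2 : g (Function.update ω N x) = g (Function.update ω' N x) := by
            apply hg
            intro k hkB
            by_cases hkN : k = N
            · subst hkN; simp [Function.update_self]
            · rw [Function.update_of_ne hkN, Function.update_of_ne hkN]
              exact hk k (Finset.mem_erase.2 ⟨hkN, hkB⟩)
          rw [e1, e2]
        have hfN : NLoc N f := ALoc.nloc hAN' hf
        have step2 : EN p q (N+1) f = EN p q N f := EN_consistent hp hq hfN
        have step3 : EN p q (N+1) g = EN p q N g' := rfl
        rw [step1, step2, step3]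
        exact ih A (B.erase N) f g' hA hB' (Finset.disjoint_of_subset_right (Finset.erase_subset _ _) hAB)
          hAN' hBN' hf hg'loc
      · have hAN' : A ⊆ Finset.range N := by
          intro k hk
          have h1 := Finset.mem_range.1 (hAN hk)
          have h2 : k ≠ N := fun h => hNA (h ▸ hk)
          exact Finset.mem_range.2 (by omega)
        have hBN' : B ⊆ Finset.range N := by
          intro k hk
          have h1 := Finset.mem_range.1 (hBN hk)
          have h2 : k ≠ N := fun h => hNB (h ▸ hk)
          exact Finset.mem_range.2 (by omega)
        have hfN : NLoc N f := ALoc.nloc hAN' hf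
        have hgN : NLoc N g := ALoc.nloc hBN' hg
        have hfgN : NLoc N (fun ω => f ω * g ω) := by
          intro ω ω' hk
          show f ω * g ω = f ω' * g ω'
          rw [hfN ω ω' hk, hgN ω ω' hk]
        rw [EN_consistent hp hq hfgN, EN_consistent hp hq hfN, EN_consistent hp hq hgN]
        exact ih A B f g hA hB hAB hAN' hBN' hf hg

/-- single-coordinate marginal mean of the `{0,1}`-indicator -/
noncomputable def mm (p q : ℝ) (k : ℕ) : ℝ :=
  if h : Even k then p else p + (q - p) * mm p q (par k)
decreasing_by exact par_lt h

lemma mm_even {k : ℕ} (h : Even k) : mm p q k = p := by rw [mm, dif_pos h]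

lemma mm_odd {k : ℕ} (h : ¬ Even k) : mm p q k = p + (q - p) * mm p q (par k) := by
  rw [mm, dif_neg h]

lemma EN_eval (hp : p ∈ Set.Ioo (0:ℝ) 1) (hq : q ∈ Set.Ioo (0:ℝ) 1) :
    ∀ (k : ℕ) (h : Fin 2 → ℝ) (N : ℕ), k < N →
    EN p q N (fun ω => h (ω k)) = h 0 + (h 1 - h 0) * mm p q k := by
  intro k
  induction k using Nat.strong_induction_on with
  | _ k ih =>
  intro h N hkN
  have hloc : NLoc (k+1) (fun ω => h (ω k)) := by
    intro ω ω' ha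
    show h (ω k) = h (ω' k)
    rw [ha k (by omega)]
  rw [EN_of_nloc hp hq hloc N hkN, EN_peel]
  by_cases hev : Even k
  · have step : ∀ ω, (∑ x : Fin 2, Ffac p q k (Function.update ω k x) *
        h (Function.update ω k x k)) = h 0 + (h 1 - h 0) * p := by
      intro ω
      rw [Fin.sum_univ_two]
      simp only [Ffac, if_pos hev, Function.update_self, P1]
      norm_num; ring
    rw [EN_congr step, EN_const hp hq, mm_even hev]
  · have hne : par k ≠ k := Nat.ne_of_lt (par_lt hev)
    have step : ∀ ω, (∑ x : Fin 2, Ffac p q k (Function.update ω k x) *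
        h (Function.update ω k x k)) = (h 0 + (h 1 - h 0) * p) +
          ((h 1 - h 0) * (q - p)) * (if ω (par k) = 1 then (1:ℝ) else 0) := by
      intro ω
      rw [Fin.sum_univ_two]
      simp only [Ffac, if_neg hev, Function.update_self, Function.update_of_ne hne, P2]
      by_cases h1 : ω (par k) = 1 <;> simp only [h1, if_pos, if_true, if_false] <;> norm_num <;> ring
    rw [EN_congr step, EN_add, EN_const hp hq, EN_const_mul]
    have hind := ih (par k) (par_lt hev) (fun x => if x = 1 then (1:ℝ) else 0) k (par_lt hev)
    have : (fun ω : ℕ → Fin 2 => if ω (par k) = 1 then (1:ℝ) else 0) =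
        (fun ω : ℕ → Fin 2 => (fun x : Fin 2 => if x = 1 then (1:ℝ) else 0) (ω (par k))) := rfl
    rw [this, hind, mm_odd hev]
    norm_num; ring

lemma EN_eval2 (hp : p ∈ Set.Ioo (0:ℝ) 1) (hq : q ∈ Set.Ioo (0:ℝ) 1)
    (j : ℕ) (hodd : ¬ Even j) (g : Fin 2 → Fin 2 → ℝ) (N : ℕ) (hjN : j < N) :
    EN p q N (fun ω => g (ω (par j)) (ω j)) =
      (fun w => P2 p q w 0 * g w 0 + P2 p q w 1 * g w 1) 0 +
      ((fun w => P2 p q w 0 * g w 0 + P2 p q w 1 * g w 1) 1 -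
       (fun w => P2 p q w 0 * g w 0 + P2 p q w 1 * g w 1) 0) * mm p q (par j) := by
  have hne : par j ≠ j := Nat.ne_of_lt (par_lt hodd)
  have hloc : NLoc (j+1) (fun ω => g (ω (par j)) (ω j)) := by
    intro ω ω' ha
    show g (ω (par j)) (ω j) = g (ω' (par j)) (ω' j)
    rw [ha j (by omega), ha (par j) (by have := par_lt hodd; omega)]
  rw [EN_of_nloc hp hq hloc N hjN, EN_peel]
  have step : ∀ ω, (∑ x : Fin 2, Ffac p q j (Function.update ω j x) *
      g (Function.update ω j x (par j)) (Function.update ω j x j)) =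
      (fun w => P2 p q w 0 * g w 0 + P2 p q w 1 * g w 1) (ω (par j)) := by
    intro ω
    rw [Fin.sum_univ_two]
    simp only [Ffac, if_neg hodd, Function.update_self, Function.update_of_ne hne]
  rw [EN_congr step]
  exact EN_eval hp hq (par j) (fun w => P2 p q w 0 * g w 0 + P2 p q w 1 * g w 1) j (par_lt hodd)

lemma sum_parity (g : ℕ → ℝ) : ∀ n : ℕ, ∑ k ∈ Finset.range n, g k =
    (∑ i ∈ Finset.range ((n+1)/2), g (2*i)) + ∑ i ∈ Finset.range (n/2), g (2*i+1) := by
  intro n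
  induction n with
  | zero => simp
  | succ n ih =>
    rw [Finset.sum_range_succ, ih]
    rcases Nat.even_or_odd n with ⟨m, rfl⟩ | ⟨m, rfl⟩
    · have h1 : (m + m + 1 + 1) / 2 = m + 1 := by omega
      have h2 : (m + m + 1) / 2 = m := by omega
      have h3 : (m + m) / 2 = m := by omega
      rw [h1, h2, h3, Finset.sum_range_succ]
      have h4 : 2 * m = m + m := by omega
      rw [h4]; ring
    · have h1 : (2 * m + 1 + 1 + 1) / 2 = m + 1 := by omega
      have h2 : (2 * m + 1 + 1) / 2 = m + 1 := by omega
      have h3 : (2 * m + 1) / 2 = m := by omega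
      rw [h1, h2, h3, Finset.sum_range_succ, Finset.sum_range_succ (fun x => g (2 * x + 1)) m]
      ring

end Stage2

section Stage3
variable {p q : ℝ}

def pathSet : ℕ → Finset ℕ
  | j => if h : Even j then {j} else insert j (pathSet (par j))
decreasing_by exact par_lt h

lemma mem_pathSet : ∀ {j i : ℕ}, i ∈ pathSet j ↔ ∃ e, (i+1) * 2^e = j+1 := by
  intro j
  induction j using Nat.strong_induction_on with
  | _ j ih =>
  intro i
  by_cases h : Even j
  · rw [pathSet, dif_pos h, Finset.mem_singleton]
    obtain ⟨m, rfl⟩ := h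
    constructor
    · rintro rfl; exact ⟨0, by ring⟩
    · rintro ⟨e, he⟩
      cases e with
      | zero => simpa using he
      | succ e =>
        exfalso
        rw [pow_succ, ← mul_assoc] at he
        omega
  · rw [pathSet, dif_neg h, Finset.mem_insert, ih (par j) (par_lt h)]
    rcases Nat.odd_iff.mp (Nat.not_even_iff_odd.mp h) with hm
    obtain ⟨m, rfl⟩ : ∃ m, j = 2 * m + 1 := ⟨j / 2, by omega⟩
    have hpar : par (2 * m + 1) = m := by simp [par]
    rw [hpar]
    constructor
    · rintro (rfl | ⟨e, he⟩)
      · exact ⟨0, by ring⟩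
      · exact ⟨e + 1, by rw [pow_succ, ← mul_assoc, he]; ring⟩
    · rintro ⟨e, he⟩
      cases e with
      | zero => left; omega
      | succ e =>
        right
        refine ⟨e, ?_⟩
        rw [pow_succ, ← mul_assoc] at he
        omega

lemma pathSet_self (j : ℕ) : j ∈ pathSet j := mem_pathSet.2 ⟨0, by ring⟩

lemma pathSet_le {i j : ℕ} (h : i ∈ pathSet j) : i ≤ j := by
  obtain ⟨e, he⟩ := mem_pathSet.1 h
  have h1 : 1 ≤ 2^e := Nat.one_le_two_pow
  nlinarith

lemma Anc_pathSet (j : ℕ) : Anc (pathSet j) := by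
  intro i hi hodd
  obtain ⟨e, he⟩ := mem_pathSet.1 hi
  obtain ⟨m, rfl⟩ : ∃ m, i = 2 * m + 1 := ⟨i / 2, by
    rcases Nat.even_or_odd i with h|h
    · exact absurd h hodd
    · obtain ⟨c, hc⟩ := h; omega⟩
  have hpar : par (2 * m + 1) = m := by simp [par]
  rw [hpar]
  refine mem_pathSet.2 ⟨e + 1, ?_⟩
  have h2 : (m+1) * 2^(e+1) = (2*m+1+1) * 2^e := by ring
  omega

lemma pathSet_subset_child (k : ℕ) : pathSet k ⊆ pathSet (2*k+1) := by
  intro i hi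
  obtain ⟨e, he⟩ := mem_pathSet.1 hi
  refine mem_pathSet.2 ⟨e + 1, ?_⟩
  have h2 : (i+1) * 2^(e+1) = ((i+1) * 2^e) * 2 := by ring
  omega

def dep (k : ℕ) : Finset ℕ := pathSet (2*k) ∪ pathSet (2*k+1)

lemma Anc_dep (k : ℕ) : Anc (dep k) := by
  intro j hj hodd
  rcases Finset.mem_union.1 hj with h | h
  · exact Finset.mem_union_left _ (Anc_pathSet _ j h hodd)
  · exact Finset.mem_union_right _ (Anc_pathSet _ j h hodd)

lemma dep_subset_range (k : ℕ) : dep k ⊆ Finset.range (2*k+2) := by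
  intro j hj
  rcases Finset.mem_union.1 hj with h | h
  · exact Finset.mem_range.2 (by have := pathSet_le h; omega)
  · exact Finset.mem_range.2 (by have := pathSet_le h; omega)

lemma mem_dep_self (k : ℕ) : k ∈ dep k :=
  Finset.mem_union_right _ (pathSet_subset_child k (pathSet_self k))

lemma mem_dep_two (k : ℕ) : 2*k ∈ dep k := Finset.mem_union_left _ (pathSet_self _)

lemma mem_dep_two1 (k : ℕ) : 2*k+1 ∈ dep k := Finset.mem_union_right _ (pathSet_self _)

lemma mem_dep_par {k : ℕ} (hodd : ¬ Even k) : par k ∈ dep k :=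
  Finset.mem_union_right _ (pathSet_subset_child k (Anc_pathSet k k (pathSet_self k) hodd))

lemma pathSet_inter {a b : ℕ} (h : ¬ Disjoint (pathSet a) (pathSet b)) :
    ∃ e, (a+1) = (b+1)*2^e ∨ (b+1) = (a+1)*2^e := by
  obtain ⟨i, hia, hib⟩ := Finset.not_disjoint_iff.1 h
  obtain ⟨e1, he1⟩ := mem_pathSet.1 hia
  obtain ⟨e2, he2⟩ := mem_pathSet.1 hib
  rcases le_total e1 e2 with hle | hle
  · refine ⟨e2 - e1, Or.inr ?_⟩
    have key : (2:ℕ)^e2 = 2^e1 * 2^(e2-e1) := by rw [← pow_add]; congr 1; omega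
    rw [← he2, key, ← mul_assoc, he1]
  · refine ⟨e1 - e2, Or.inl ?_⟩
    have key : (2:ℕ)^e1 = 2^e2 * 2^(e1-e2) := by rw [← pow_add]; congr 1; omega
    rw [← he1, key, ← mul_assoc, he2]

lemma related_cases {k l : ℕ} (h : ¬ Disjoint (dep k) (dep l)) :
    k = l ∨ (∃ e, l + 1 = (2*k+1) * 2^e) ∨ (∃ e, k + 1 = (2*l+1) * 2^e) ∨
    (∃ e, k + 1 = (l+1) * 2^(e+1)) ∨ (∃ e, l + 1 = (k+1) * 2^(e+1)) := by
  unfold dep at h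
  rw [Finset.disjoint_union_left] at h
  rcases not_and_or.1 h with h' | h' <;> rw [Finset.disjoint_union_right] at h' <;>
    rcases not_and_or.1 h' with h'' | h''
  · -- pathSet (2k) vs pathSet (2l)
    obtain ⟨e, he | he⟩ := pathSet_inter h'' <;>
    · cases e with
      | zero => left; omega
      | succ e => exfalso; rw [pow_succ, ← mul_assoc] at he; omega
  · -- pathSet (2k) vs pathSet (2l+1) : 2k+1 = (2l+2)*2^e ∨ 2l+2 = (2k+1)*2^e
    obtain ⟨e, he | he⟩ := pathSet_inter h''
    · exfalso
      rcases e with _ | e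
      · omega
      · rw [pow_succ, ← mul_assoc] at he; omega
    · rcases e with _ | e
      · omega
      · right; left
        refine ⟨e, ?_⟩
        rw [pow_succ, ← mul_assoc] at he
        omega
  · -- pathSet (2k+1) vs pathSet (2l) : 2k+2 = (2l+1)*2^e ∨ 2l+1 = (2k+2)*2^e
    obtain ⟨e, he | he⟩ := pathSet_inter h''
    · rcases e with _ | e
      · omega
      · right; right; left
        refine ⟨e, ?_⟩
        rw [pow_succ, ← mul_assoc] at he
        omega
    · exfalso
      rcases e with _ | e
      · omega
      · rw [pow_succ, ← mul_assoc] at he; omega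
  · -- pathSet (2k+1) vs pathSet (2l+1) : 2k+2 = (2l+2)*2^e ∨ 2l+2 = (2k+2)*2^e
    obtain ⟨e, he | he⟩ := pathSet_inter h''
    · rcases e with _ | e
      · left; omega
      · right; right; right; left
        exact ⟨e, by have h2 : (2*l+1+1) * 2^(e+1) = 2 * ((l+1) * 2^(e+1)) := by ring
                     omega⟩
    · rcases e with _ | e
      · left; omega
      · right; right; right; right
        exact ⟨e, by have h2 : (2*k+1+1) * 2^(e+1) = 2 * ((k+1) * 2^(e+1)) := by ring
                     omega⟩

lemma GEO : ∀ n M : ℕ, (∑ e ∈ Finset.range M, n / 2^(e+1)) ≤ n := by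
  intro n
  induction n using Nat.strong_induction_on with
  | _ n ih =>
  intro M
  rcases Nat.eq_zero_or_pos n with rfl | hn
  · simp
  cases M with
  | zero => simp
  | succ M =>
    rw [Finset.sum_range_succ']
    have hdiv : ∀ e, n / 2^(e+1+1) = (n/2) / 2^(e+1) := by
      intro e
      rw [show (2:ℕ)^(e+1+1) = 2 * 2^(e+1) by ring, ← Nat.div_div_eq_div_mul]
    have : (∑ e ∈ Finset.range M, n / 2^(e+1+1)) = ∑ e ∈ Finset.range M, (n/2) / 2^(e+1) := by
      exact Finset.sum_congr rfl (fun e _ => hdiv e)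
    rw [this]
    have h2 := ih (n/2) (by omega) M
    have h3 : n / 2^(0+1) = n / 2 := by norm_num
    omega

lemma card_related (n : ℕ) :
    (((Finset.range n) ×ˢ (Finset.range n)).filter
      (fun kl => ((dep kl.1) ∩ (dep kl.2)).Nonempty)).card ≤ 7 * n + 2 := by
  classical
  set B0 := (Finset.range n).image (fun k => (k, k)) with hB0
  set B1 := (Finset.range (n+1)).biUnion (fun e =>
    ((Finset.range n).filter (fun k => (2*k+1) * 2^e ≤ n)).image
      (fun k => (k, (2*k+1)*2^e - 1))) with hB1
  set B2 := (Finset.range (n+1)).biUnion (fun e =>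
    ((Finset.range n).filter (fun l => (2*l+1) * 2^e ≤ n)).image
      (fun l => ((2*l+1)*2^e - 1, l))) with hB2
  set B3 := (Finset.range n).biUnion (fun e =>
    ((Finset.range n).filter (fun l => (l+1) * 2^(e+1) ≤ n)).image
      (fun l => ((l+1)*2^(e+1) - 1, l))) with hB3
  set B4 := (Finset.range n).biUnion (fun e =>
    ((Finset.range n).filter (fun k => (k+1) * 2^(e+1) ≤ n)).image
      (fun k => (k, (k+1)*2^(e+1) - 1))) with hB4
  have hsub : (((Finset.range n) ×ˢ (Finset.range n)).filter
      (fun kl => ((dep kl.1) ∩ (dep kl.2)).Nonempty)) ⊆ B0 ∪ B1 ∪ B2 ∪ B3 ∪ B4 := by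
    rintro ⟨k, l⟩ hkl
    rw [Finset.mem_filter, Finset.mem_product, Finset.mem_range, Finset.mem_range] at hkl
    obtain ⟨⟨hk, hl⟩, hrel⟩ := hkl
    have hnd : ¬ Disjoint (dep k) (dep l) := by
      rw [Finset.not_disjoint_iff_nonempty_inter]; exact hrel
    simp only [Finset.mem_union]
    rcases related_cases hnd with rfl | ⟨e, he⟩ | ⟨e, he⟩ | ⟨e, he⟩ | ⟨e, he⟩
    · exact Or.inl (Or.inl (Or.inl (Or.inl (Finset.mem_image.2 ⟨k, Finset.mem_range.2 hk, rfl⟩))))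
    · refine Or.inl (Or.inl (Or.inl (Or.inr ?_)))
      rw [hB1]
      refine Finset.mem_biUnion.2 ⟨e, Finset.mem_range.2 ?_, Finset.mem_image.2
        ⟨k, Finset.mem_filter.2 ⟨Finset.mem_range.2 hk, by omega⟩, by simp; omega⟩⟩
      have := Nat.lt_two_pow_self (n := e)
      have h2 : 2^e ≤ (2*k+1) * 2^e := Nat.le_mul_of_pos_left _ (by omega)
      omega
    · refine Or.inl (Or.inl (Or.inr ?_))
      rw [hB2]
      refine Finset.mem_biUnion.2 ⟨e, Finset.mem_range.2 ?_, Finset.mem_image.2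
        ⟨l, Finset.mem_filter.2 ⟨Finset.mem_range.2 hl, by omega⟩, by simp; omega⟩⟩
      have := Nat.lt_two_pow_self (n := e)
      have h2 : 2^e ≤ (2*l+1) * 2^e := Nat.le_mul_of_pos_left _ (by omega)
      omega
    · refine Or.inl (Or.inr ?_)
      rw [hB3]
      refine Finset.mem_biUnion.2 ⟨e, Finset.mem_range.2 ?_, Finset.mem_image.2
        ⟨l, Finset.mem_filter.2 ⟨Finset.mem_range.2 hl, by omega⟩, by simp; omega⟩⟩
      have := Nat.lt_two_pow_self (n := (e+1))
      have h2 : 2^(e+1) ≤ (l+1) * 2^(e+1) := Nat.le_mul_of_pos_left _ (by omega)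
      omega
    · refine Or.inr ?_
      rw [hB4]
      refine Finset.mem_biUnion.2 ⟨e, Finset.mem_range.2 ?_, Finset.mem_image.2
        ⟨k, Finset.mem_filter.2 ⟨Finset.mem_range.2 hk, by omega⟩, by simp; omega⟩⟩
      have := Nat.lt_two_pow_self (n := (e+1))
      have h2 : 2^(e+1) ≤ (k+1) * 2^(e+1) := Nat.le_mul_of_pos_left _ (by omega)
      omega
  have c0 : B0.card ≤ n := le_trans (Finset.card_image_le) (by rw [Finset.card_range])
  have hc12 : ∀ e, ((Finset.range n).filter (fun k => (2*k+1) * 2^e ≤ n)).card ≤ n / 2^(e+1) + 1 := by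
    intro e
    have hsub2 : ((Finset.range n).filter (fun k => (2*k+1) * 2^e ≤ n)) ⊆
        Finset.range (n / 2^(e+1) + 1) := by
      intro k hk
      rw [Finset.mem_filter] at hk
      rw [Finset.mem_range]
      have hle : k * 2^(e+1) ≤ n := by
        calc k * 2^(e+1) = (2*k) * 2^e := by ring
          _ ≤ (2*k+1) * 2^e := Nat.mul_le_mul_right _ (by omega)
          _ ≤ n := hk.2
      have := (Nat.le_div_iff_mul_le (by positivity)).2 hle
      omega
    exact le_trans (Finset.card_le_card hsub2) (by rw [Finset.card_range])
  have hc34 : ∀ e, ((Finset.range n).filter (fun l => (l+1) * 2^(e+1) ≤ n)).card ≤ n / 2^(e+1) := by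
    intro e
    have hsub2 : ((Finset.range n).filter (fun l => (l+1) * 2^(e+1) ≤ n)) ⊆
        Finset.range (n / 2^(e+1)) := by
      intro l hl
      rw [Finset.mem_filter] at hl
      rw [Finset.mem_range]
      have := (Nat.le_div_iff_mul_le (show 0 < 2^(e+1) by positivity)).2 hl.2
      omega
    exact le_trans (Finset.card_le_card hsub2) (by rw [Finset.card_range])
  have c1 : B1.card ≤ 2 * n + 1 := by
    calc B1.card ≤ ∑ e ∈ Finset.range (n+1),
        (((Finset.range n).filter (fun k => (2*k+1) * 2^e ≤ n)).image
          (fun k => (k, (2*k+1)*2^e - 1))).card := Finset.card_biUnion_le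
      _ ≤ ∑ e ∈ Finset.range (n+1), (n / 2^(e+1) + 1) := by
          refine Finset.sum_le_sum (fun e _ => le_trans Finset.card_image_le (hc12 e))
      _ = (∑ e ∈ Finset.range (n+1), n / 2^(e+1)) + (n+1) := by
          rw [Finset.sum_add_distrib, Finset.sum_const, Finset.card_range, smul_eq_mul, mul_one]
      _ ≤ n + (n + 1) := by have := GEO n (n+1); omega
      _ = 2 * n + 1 := by ring
  have c2 : B2.card ≤ 2 * n + 1 := by
    calc B2.card ≤ ∑ e ∈ Finset.range (n+1),
        (((Finset.range n).filter (fun l => (2*l+1) * 2^e ≤ n)).image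
          (fun l => ((2*l+1)*2^e - 1, l))).card := Finset.card_biUnion_le
      _ ≤ ∑ e ∈ Finset.range (n+1), (n / 2^(e+1) + 1) := by
          refine Finset.sum_le_sum (fun e _ => le_trans Finset.card_image_le (hc12 e))
      _ = (∑ e ∈ Finset.range (n+1), n / 2^(e+1)) + (n+1) := by
          rw [Finset.sum_add_distrib, Finset.sum_const, Finset.card_range, smul_eq_mul, mul_one]
      _ ≤ n + (n + 1) := by have := GEO n (n+1); omega
      _ = 2 * n + 1 := by ring
  have c3 : B3.card ≤ n := by
    calc B3.card ≤ ∑ e ∈ Finset.range n,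
        (((Finset.range n).filter (fun l => (l+1) * 2^(e+1) ≤ n)).image
          (fun l => ((l+1)*2^(e+1) - 1, l))).card := Finset.card_biUnion_le
      _ ≤ ∑ e ∈ Finset.range n, n / 2^(e+1) := by
          refine Finset.sum_le_sum (fun e _ => le_trans Finset.card_image_le (hc34 e))
      _ ≤ n := GEO n n
  have c4 : B4.card ≤ n := by
    calc B4.card ≤ ∑ e ∈ Finset.range n,
        (((Finset.range n).filter (fun k => (k+1) * 2^(e+1) ≤ n)).image
          (fun k => (k, (k+1)*2^(e+1) - 1))).card := Finset.card_biUnion_le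
      _ ≤ ∑ e ∈ Finset.range n, n / 2^(e+1) := by
          refine Finset.sum_le_sum (fun e _ => le_trans Finset.card_image_le (hc34 e))
      _ ≤ n := GEO n n
  calc (((Finset.range n) ×ˢ (Finset.range n)).filter
      (fun kl => ((dep kl.1) ∩ (dep kl.2)).Nonempty)).card
      ≤ (B0 ∪ B1 ∪ B2 ∪ B3 ∪ B4).card := Finset.card_le_card hsub
    _ ≤ B0.card + B1.card + B2.card + B3.card + B4.card := by
        calc (B0 ∪ B1 ∪ B2 ∪ B3 ∪ B4).card ≤ (B0 ∪ B1 ∪ B2 ∪ B3).card + B4.card :=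
              Finset.card_union_le _ _
          _ ≤ (B0 ∪ B1 ∪ B2).card + B3.card + B4.card := by
              have := Finset.card_union_le (B0 ∪ B1 ∪ B2) B3; omega
          _ ≤ (B0 ∪ B1).card + B2.card + B3.card + B4.card := by
              have := Finset.card_union_le (B0 ∪ B1) B2; omega
          _ ≤ B0.card + B1.card + B2.card + B3.card + B4.card := by
              have := Finset.card_union_le B0 B1; omega
    _ ≤ 7 * n + 2 := by omega

end Stage3

section Stage4
variable {p q : ℝ}

def ext0 {N : ℕ} (w : Fin N → Fin 2) : ℕ → Fin 2 :=
  fun k => if h : k < N then w ⟨k, h⟩ else 0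

def snocEquiv (N : ℕ) : (Fin N → Fin 2) × Fin 2 ≃ (Fin (N+1) → Fin 2) where
  toFun := fun wx => Fin.snoc wx.1 wx.2
  invFun := fun v => (fun i => v i.castSucc, v (Fin.last N))
  left_inv := by
    rintro ⟨w, x⟩
    simp [Fin.snoc_castSucc, Fin.snoc_last]
  right_inv := by
    intro v
    funext i
    cases i using Fin.lastCases with
    | last => simp [Fin.snoc_last]
    | cast i => simp [Fin.snoc_castSucc]

lemma ext0_snoc {N : ℕ} (w : Fin N → Fin 2) (x : Fin 2) :
    ext0 (Fin.snoc w x : Fin (N+1) → Fin 2) = Function.update (ext0 w) N x := by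
  funext k
  by_cases h : k < N
  · have h1 : k < N + 1 := by omega
    have h2 : (⟨k, h1⟩ : Fin (N+1)) = Fin.castSucc ⟨k, h⟩ := rfl
    rw [ext0, dif_pos h1, h2, Fin.snoc_castSucc,
      Function.update_of_ne (by omega : k ≠ N), ext0, dif_pos h]
  · by_cases hk : k = N
    · subst hk
      have h1 : k < k + 1 := by omega
      have h2 : (⟨k, h1⟩ : Fin (k+1)) = Fin.last k := rfl
      rw [ext0, dif_pos h1, h2, Fin.snoc_last, Function.update_self]
    · have h1 : ¬ k < N + 1 := by omega
      rw [ext0, dif_neg h1, Function.update_of_ne hk, ext0, dif_neg h]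

lemma Ffac_local {j : ℕ} {ω ω' : ℕ → Fin 2} (h1 : ω j = ω' j) (h2 : ω (par j) = ω' (par j)) :
    Ffac p q j ω = Ffac p q j ω' := by
  unfold Ffac
  by_cases h : Even j <;> simp [h, h1, h2]

lemma par_le (j : ℕ) : par j ≤ j := by unfold par; omega

lemma Pe_nloc {N : ℕ} {f : (ℕ → Fin 2) → ℝ} (hf : NLoc (N+1) f) :
    NLoc N (fun ω => ∑ x : Fin 2,
      Ffac p q N (Function.update ω N x) * f (Function.update ω N x)) := by
  intro ω ω' hk
  refine Finset.sum_congr rfl (fun x _ => ?_)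
  have e1 : Ffac p q N (Function.update ω N x) = Ffac p q N (Function.update ω' N x) := by
    apply Ffac_local
    · rw [Function.update_self, Function.update_self]
    · by_cases hpar : par N = N
      · rw [hpar, Function.update_self, Function.update_self]
      · rw [Function.update_of_ne hpar, Function.update_of_ne hpar]
        exact hk _ (lt_of_le_of_ne (par_le N) hpar)
  have e2 : f (Function.update ω N x) = f (Function.update ω' N x) := by
    apply hf
    intro k hkN
    by_cases hkN' : k = N
    · subst hkN'; rw [Function.update_self, Function.update_self]
    · rw [Function.update_of_ne hkN', Function.update_of_ne hkN']
      exact hk k (by omega)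
  rw [e1, e2]

lemma EN_word (hp : p ∈ Set.Ioo (0:ℝ) 1) (hq : q ∈ Set.Ioo (0:ℝ) 1) :
    ∀ (N : ℕ) (f : (ℕ → Fin 2) → ℝ), NLoc N f →
    EN p q N f = ∑ w : Fin N → Fin 2,
      (∏ j ∈ Finset.range N, Ffac p q j (ext0 w)) * f (ext0 w) := by
  intro N
  induction N with
  | zero =>
    intro f _
    have hzero : ∀ w : Fin 0 → Fin 2, ext0 w = (fun _ => 0) := by
      intro w; funext k; rw [ext0, dif_neg (by omega)]
    calc EN p q 0 f = f (fun _ => 0) := rfl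
      _ = ∑ w : Fin 0 → Fin 2, (∏ j ∈ Finset.range 0, Ffac p q j (ext0 w)) * f (ext0 w) := by
          rw [Fintype.sum_eq_single (fun (_ : Fin 0) => (0 : Fin 2))
            (fun w => by simp [Subsingleton.elim w (fun _ => (0:Fin 2))])]
          · rw [hzero]; simp
  | succ N ih =>
    intro f hf
    rw [EN_peel, ih _ (Pe_nloc hf)]
    rw [← Fintype.sum_equiv (snocEquiv N)
      (fun wx : (Fin N → Fin 2) × Fin 2 =>
        (∏ j ∈ Finset.range (N+1), Ffac p q j (ext0 (Fin.snoc wx.1 wx.2 : Fin (N+1) → Fin 2))) *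
          f (ext0 (Fin.snoc wx.1 wx.2 : Fin (N+1) → Fin 2)))
      (fun v => (∏ j ∈ Finset.range (N+1), Ffac p q j (ext0 v)) * f (ext0 v))
      (fun wx => rfl)]
    rw [Fintype.sum_prod_type]
    refine Finset.sum_congr rfl (fun w _ => ?_)
    rw [Finset.mul_sum]
    refine Finset.sum_congr rfl (fun x _ => ?_)
    rw [ext0_snoc, Finset.prod_range_succ]
    have hprod : ∀ j ∈ Finset.range N,
        Ffac p q j (Function.update (ext0 w) N x) = Ffac p q j (ext0 w) := by
      intro j hj
      have hjN := Finset.mem_range.1 hj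
      apply Ffac_local
      · exact Function.update_of_ne (by omega) _ _
      · exact Function.update_of_ne (by have := par_le j; omega) _ _
    rw [Finset.prod_congr rfl hprod]
    ring

lemma measurable_cyl (τ : ℕ → Fin 2) (n : ℕ) : MeasurableSet (cyl τ n) := by
  have : cyl τ n = ⋂ (k : ℕ) (_ : k < n), (fun σ : ℕ → Fin 2 => σ k) ⁻¹' {τ k} := by
    ext σ; simp [cyl]
  rw [this]
  refine MeasurableSet.iInter (fun k => MeasurableSet.iInter (fun _ => ?_))
  exact ((continuous_apply k).measurable) (measurableSet_singleton _)

lemma cylMass_nonneg (hp : p ∈ Set.Ioo (0:ℝ) 1) (hq : q ∈ Set.Ioo (0:ℝ) 1)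
    (ω : ℕ → Fin 2) (n : ℕ) : 0 ≤ cylMass p q ω n := by
  rw [cylMass_eq_prod]
  exact Finset.prod_nonneg (fun j _ => Ffac_nonneg hp hq j ω)

lemma mu_eq_EN (hp : p ∈ Set.Ioo (0:ℝ) 1) (hq : q ∈ Set.Ioo (0:ℝ) 1)
    (μ : Measure (ℕ → Fin 2))
    (hcyl : ∀ (ω : ℕ → Fin 2) (n : ℕ), 1 ≤ n → μ (cyl ω n) = ENNReal.ofReal (cylMass p q ω n))
    (N : ℕ) (hN : 1 ≤ N) (S : Set (ℕ → Fin 2))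
    (hS : ∀ ω ω', (∀ k < N, ω k = ω' k) → (ω ∈ S ↔ ω' ∈ S)) :
    μ S = ENNReal.ofReal (EN p q N (Set.indicator S (fun _ => (1:ℝ)))) := by
  classical
  set W := (Finset.univ : Finset (Fin N → Fin 2)).filter (fun w => ext0 w ∈ S) with hW
  have hdecomp : S = ⋃ w ∈ W, cyl (ext0 w) N := by
    ext σ
    constructor
    · intro hσ
      refine Set.mem_iUnion₂.2 ⟨fun i : Fin N => σ i.1, ?_, ?_⟩
      · rw [hW, Finset.mem_filter]
        refine ⟨Finset.mem_univ _, ?_⟩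
        rw [← hS σ _ (fun k hk => by rw [ext0, dif_pos hk])]
        exact hσ
      · intro k hk
        rw [ext0, dif_pos hk]
    · intro hσ
      obtain ⟨w, hw, hσw⟩ := Set.mem_iUnion₂.1 hσ
      rw [hW, Finset.mem_filter] at hw
      exact (hS σ (ext0 w) (fun k hk => hσw k hk)).2 hw.2
  have hdisj : (↑W : Set (Fin N → Fin 2)).PairwiseDisjoint (fun w => cyl (ext0 w) N) := by
    intro w _ w' _ hne
    refine Set.disjoint_left.2 (fun σ hσ hσ' => hne ?_)
    funext i
    have h1 := hσ i.1 i.2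
    have h2 := hσ' i.1 i.2
    rw [ext0, dif_pos i.2] at h1 h2
    have : w ⟨i.1, i.2⟩ = w' ⟨i.1, i.2⟩ := by rw [← h1, ← h2]
    simpa using this
  have hμS : μ S = ∑ w ∈ W, μ (cyl (ext0 w) N) := by
    rw [hdecomp]; exact measure_biUnion_finset hdisj (fun w _ => measurable_cyl _ _)
  rw [hμS]
  have hval : ∀ w ∈ W, μ (cyl (ext0 w) N) = ENNReal.ofReal (cylMass p q (ext0 w) N) :=
    fun w _ => hcyl _ _ hN
  rw [Finset.sum_congr rfl hval, ← ENNReal.ofReal_sum_of_nonneg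
    (fun w _ => cylMass_nonneg hp hq _ _)]
  congr 1
  have hloc : NLoc N (Set.indicator S (fun _ => (1:ℝ))) := by
    intro ω ω' hk
    by_cases h : ω ∈ S
    · rw [Set.indicator_of_mem h, Set.indicator_of_mem ((hS ω ω' hk).1 h)]
    · rw [Set.indicator_of_notMem h,
        Set.indicator_of_notMem (fun h' => h ((hS ω ω' hk).2 h'))]
  rw [EN_word hp hq N _ hloc]
  rw [hW, Finset.sum_filter]
  refine Finset.sum_congr rfl (fun w _ => ?_)
  rw [cylMass_eq_prod]
  by_cases h : ext0 w ∈ S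
  · rw [if_pos h, Set.indicator_of_mem h, mul_one]
  · rw [if_neg h, Set.indicator_of_notMem h, mul_zero]

lemma cheb (hp : p ∈ Set.Ioo (0:ℝ) 1) (hq : q ∈ Set.Ioo (0:ℝ) 1)
    (μ : Measure (ℕ → Fin 2))
    (hcyl : ∀ (ω : ℕ → Fin 2) (n : ℕ), 1 ≤ n → μ (cyl ω n) = ENNReal.ofReal (cylMass p q ω n))
    (N : ℕ) (hN : 1 ≤ N) (V : (ℕ → Fin 2) → ℝ) (hV : NLoc N V) (a : ℝ) (ha : 0 < a) :
    μ {ω | a ≤ |V ω - EN p q N V|} ≤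
      ENNReal.ofReal ((EN p q N (fun ω => (V ω - EN p q N V)^2)) / a^2) := by
  set M := EN p q N V with hM
  have hS : ∀ ω ω', (∀ k < N, ω k = ω' k) →
      (ω ∈ {ω | a ≤ |V ω - M|} ↔ ω' ∈ {ω | a ≤ |V ω - M|}) := by
    intro ω ω' hk
    simp only [Set.mem_setOf_eq, hV ω ω' hk]
  rw [mu_eq_EN hp hq μ hcyl N hN _ hS]
  apply ENNReal.ofReal_le_ofReal
  have key : EN p q N (Set.indicator {ω | a ≤ |V ω - M|} (fun _ => (1:ℝ))) ≤
      EN p q N (fun ω => (1/a^2) * (V ω - M)^2) := by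
    apply EN_mono hp hq
    intro ω
    by_cases h : ω ∈ {ω | a ≤ |V ω - M|}
    · rw [Set.indicator_of_mem h]
      rw [Set.mem_setOf_eq] at h
      have h2 : a^2 ≤ (V ω - M)^2 := by
        have := sq_abs (V ω - M)
        nlinarith [abs_nonneg (V ω - M)]
      have ha2 : (0:ℝ) < a^2 := by positivity
      rw [show (1:ℝ)/a^2 * (V ω - M)^2 = (V ω - M)^2/a^2 by ring, le_div_iff₀ ha2, one_mul]
      exact h2
    · rw [Set.indicator_of_notMem h]
      positivity
  calc EN p q N (Set.indicator {ω | a ≤ |V ω - M|} (fun _ => (1:ℝ)))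
      ≤ EN p q N (fun ω => (1/a^2) * (V ω - M)^2) := key
    _ = (1/a^2) * EN p q N (fun ω => (V ω - M)^2) := EN_const_mul _ _ _
    _ = (EN p q N (fun ω => (V ω - M)^2)) / a^2 := by ring

end Stage4

open scoped Topology

section Stage5
variable {p q : ℝ}

lemma var_bound (hp : p ∈ Set.Ioo (0:ℝ) 1) (hq : q ∈ Set.Ioo (0:ℝ) 1)
    (T : ℕ → (ℕ → Fin 2) → ℝ) (G : ℝ) (hG : ∀ k ω, |T k ω| ≤ G)
    (hloc : ∀ k, ALoc (dep k) (T k)) (n : ℕ) :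
    EN p q (2*n+2) (fun ω => ((∑ k ∈ Finset.range n, T k ω) -
      EN p q (2*n+2) (fun ω => ∑ k ∈ Finset.range n, T k ω))^2) ≤ 4*G^2*(7*n+2) := by
  classical
  set N := 2*n+2 with hNdef
  have hG0 : 0 ≤ G := le_trans (abs_nonneg _) (hG 0 (fun _ => 0))
  set e : ℕ → ℝ := fun k => EN p q N (T k) with he
  have hMean : EN p q N (fun ω => ∑ k ∈ Finset.range n, T k ω) = ∑ k ∈ Finset.range n, e k :=
    EN_sum _ _ _
  set Z : ℕ → (ℕ → Fin 2) → ℝ := fun k ω => T k ω - e k with hZ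
  have hZloc : ∀ k, ALoc (dep k) (Z k) := by
    intro k ω ω' hk
    show T k ω - e k = T k ω' - e k
    rw [hloc k ω ω' hk]
  have hEZ : ∀ k, EN p q N (Z k) = 0 := by
    intro k
    have : EN p q N (fun ω => T k ω + (fun _ => -e k) ω) = EN p q N (T k) + EN p q N (fun _ => -e k) :=
      EN_add _ _ _
    have h2 : EN p q N (Z k) = EN p q N (fun ω => T k ω + (fun _ => -e k) ω) := by
      apply EN_congr; intro ω; show T k ω - e k = T k ω + -e k; ring
    rw [h2, this, EN_const hp hq]
    simp only [he]
    ring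
  have hZbd : ∀ k ω, |Z k ω| ≤ 2*G := by
    intro k ω
    have h1 : |e k| ≤ G := EN_abs_le hp hq (hG k)
    calc |Z k ω| = |T k ω - e k| := rfl
      _ ≤ |T k ω| + |e k| := abs_sub _ _
      _ ≤ G + G := add_le_add (hG k ω) h1
      _ = 2*G := by ring
  have hdepN : ∀ k, k < n → dep k ⊆ Finset.range N := by
    intro k hk
    refine subset_trans (dep_subset_range k) ?_
    intro j hj
    rw [Finset.mem_range] at *
    omega
  have hsq : ∀ ω, ((∑ k ∈ Finset.range n, T k ω) -
      EN p q N (fun ω => ∑ k ∈ Finset.range n, T k ω))^2 =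
      ∑ k ∈ Finset.range n, ∑ l ∈ Finset.range n, Z k ω * Z l ω := by
    intro ω
    rw [hMean, ← Finset.sum_mul_sum]
    rw [← Finset.sum_sub_distrib]
    ring
  have step1 : EN p q N (fun ω => ((∑ k ∈ Finset.range n, T k ω) -
      EN p q N (fun ω => ∑ k ∈ Finset.range n, T k ω))^2) =
      ∑ k ∈ Finset.range n, ∑ l ∈ Finset.range n, EN p q N (fun ω => Z k ω * Z l ω) := by
    rw [EN_congr hsq]
    rw [EN_sum]
    refine Finset.sum_congr rfl (fun k _ => ?_)
    exact EN_sum _ _ _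
  rw [step1]
  have hterm : ∀ k ∈ Finset.range n, ∀ l ∈ Finset.range n,
      EN p q N (fun ω => Z k ω * Z l ω) ≤
        (if ((dep k) ∩ (dep l)).Nonempty then 4*G^2 else 0) := by
    intro k hk l hl
    by_cases hrel : ((dep k) ∩ (dep l)).Nonempty
    · rw [if_pos hrel]
      have hbd : ∀ ω, |Z k ω * Z l ω| ≤ 4*G^2 := by
        intro ω
        rw [abs_mul]
        calc |Z k ω| * |Z l ω| ≤ (2*G) * (2*G) :=
            mul_le_mul (hZbd k ω) (hZbd l ω) (abs_nonneg _) (by linarith)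
          _ = 4*G^2 := by ring
      exact le_trans (le_abs_self _) (EN_abs_le hp hq hbd)
    · rw [if_neg hrel]
      have hdisj : Disjoint (dep k) (dep l) := by
        rw [Finset.disjoint_iff_inter_eq_empty]
        exact Finset.not_nonempty_iff_eq_empty.1 hrel
      have := EN_mul_indep hp hq N (dep k) (dep l) (Z k) (Z l) (Anc_dep k) (Anc_dep l)
        hdisj (hdepN k (Finset.mem_range.1 hk)) (hdepN l (Finset.mem_range.1 hl))
        (hZloc k) (hZloc l)
      rw [this, hEZ k, hEZ l, mul_zero]
  calc ∑ k ∈ Finset.range n, ∑ l ∈ Finset.range n, EN p q N (fun ω => Z k ω * Z l ω)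
      ≤ ∑ k ∈ Finset.range n, ∑ l ∈ Finset.range n,
          (if ((dep k) ∩ (dep l)).Nonempty then 4*G^2 else 0) := by
        refine Finset.sum_le_sum (fun k hk => Finset.sum_le_sum (fun l hl => hterm k hk l hl))
    _ = ∑ kl ∈ (Finset.range n) ×ˢ (Finset.range n),
          (if ((dep kl.1) ∩ (dep kl.2)).Nonempty then 4*G^2 else 0) := by
        rw [Finset.sum_product]
    _ = (((Finset.range n) ×ˢ (Finset.range n)).filter
          (fun kl => ((dep kl.1) ∩ (dep kl.2)).Nonempty)).card * (4*G^2) := by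
        rw [← Finset.sum_filter, Finset.sum_const, nsmul_eq_mul]
    _ ≤ (7*n+2) * (4*G^2) := by
        refine mul_le_mul_of_nonneg_right ?_ (by positivity)
        have := card_related n
        exact_mod_cast Nat.cast_le.2 this
    _ = 4*G^2*(7*n+2) := by ring

theorem slln (hp : p ∈ Set.Ioo (0:ℝ) 1) (hq : q ∈ Set.Ioo (0:ℝ) 1)
    (μ : Measure (ℕ → Fin 2))
    (hcyl : ∀ (ω : ℕ → Fin 2) (n : ℕ), 1 ≤ n → μ (cyl ω n) = ENNReal.ofReal (cylMass p q ω n))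
    (T : ℕ → (ℕ → Fin 2) → ℝ) (G : ℝ) (hG : ∀ k ω, |T k ω| ≤ G)
    (hloc : ∀ k, ALoc (dep k) (T k)) (Λ K : ℝ)
    (hmean : ∀ n : ℕ, |(∑ k ∈ Finset.range n, EN p q (2*k+2) (T k)) - Λ * n| ≤ K) :
    ∀ᵐ ω ∂μ, Tendsto (fun n => (∑ k ∈ Finset.range n, T k ω) / n) atTop (𝓝 Λ) := by
  classical
  have hG0 : 0 ≤ G := le_trans (abs_nonneg _) (hG 0 (fun _ => 0))
  set W : ℕ → (ℕ → Fin 2) → ℝ := fun n ω => ∑ k ∈ Finset.range n, T k ω with hWdef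
  set e : ℕ → ℝ := fun k => EN p q (2*k+2) (T k) with hedef
  set M : ℕ → ℝ := fun n => ∑ k ∈ Finset.range n, e k with hMdef
  have hTloc : ∀ k, NLoc (2*k+2) (T k) := fun k => ALoc.nloc (dep_subset_range k) (hloc k)
  have heq : ∀ n k, k < n → EN p q (2*n+2) (T k) = e k := by
    intro n k hk
    rw [hedef]
    exact EN_of_nloc hp hq (hTloc k) (2*n+2) (by omega)
  have hMean : ∀ n, EN p q (2*n+2) (W n) = M n := by
    intro n
    rw [hWdef, hMdef]
    calc EN p q (2*n+2) (fun ω => ∑ k ∈ Finset.range n, T k ω)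
        = ∑ k ∈ Finset.range n, EN p q (2*n+2) (T k) := EN_sum _ _ _
      _ = ∑ k ∈ Finset.range n, e k := Finset.sum_congr rfl
          (fun k hk => heq n k (Finset.mem_range.1 hk))
  have hWloc : ∀ n, NLoc (2*n+2) (W n) := by
    intro n ω ω' hk
    refine Finset.sum_congr rfl (fun j hj => ?_)
    have hjn := Finset.mem_range.1 hj
    refine hTloc j ω ω' (fun i hi => hk i (by omega))
  have hcheb : ∀ (n : ℕ) (a : ℝ), 0 < a →
      μ {ω | a ≤ |W n ω - M n|} ≤ ENNReal.ofReal ((4*G^2*(7*n+2)) / a^2) := by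
    intro n a ha
    have h1 := cheb hp hq μ hcyl (2*n+2) (by omega) (W n) (hWloc n) a ha
    rw [hMean n] at h1
    refine le_trans h1 (ENNReal.ofReal_le_ofReal ?_)
    rw [← hMean n]
    have h2 := var_bound hp hq T G hG hloc n
    gcongr
  -- Borel-Cantelli
  set s : ℕ → ℕ → Set (ℕ → Fin 2) := fun i j =>
    {ω | ((j:ℝ)+1)^2/((i:ℝ)+1) ≤ |W ((j+1)^2) ω - M ((j+1)^2)|} with hsdef
  have hBC : ∀ i, μ (limsup (s i) atTop) = 0 := by
    intro i
    apply measure_limsup_atTop_eq_zero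
    have hbound : ∀ j, μ (s i j) ≤
        ENNReal.ofReal ((36*G^2*((i:ℝ)+1)^2) * (1/((j:ℝ)+1)^2)) := by
      intro j
      have ha : (0:ℝ) < ((j:ℝ)+1)^2/((i:ℝ)+1) := by positivity
      have h1 := hcheb ((j+1)^2) _ ha
      refine le_trans h1 (ENNReal.ofReal_le_ofReal ?_)
      rw [mul_one_div]
      have hx1 : (1:ℝ) ≤ ((j:ℝ)+1) := by
        have : (0:ℝ) ≤ (j:ℝ) := Nat.cast_nonneg j
        linarith
      have hcast : (((((j+1)^2 : ℕ))):ℝ) = ((j:ℝ)+1)^2 := by push_cast; ring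
      rw [hcast]
      set x : ℝ := ((j:ℝ)+1) with hxdef
      set y : ℝ := ((i:ℝ)+1) with hydef
      have hx0 : (0:ℝ) < x := by rw [hxdef]; positivity
      have hy0 : (0:ℝ) < y := by rw [hydef]; positivity
      have hkey : 4*G^2*(7*x^2+2) / (x^2/y)^2 = (4*G^2*(7*x^2+2)) * y^2 / (x^2)^2 := by
        field_simp
      rw [hkey, div_le_div_iff₀ (by positivity) (by positivity)]
      have h4 : 1 ≤ x^2 := by nlinarith
      have h5 : 0 ≤ G^2*(y^2*(x^2*(x^2-1))) := by
        have hxx : (0:ℝ) ≤ x^2 - 1 := by linarith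
        have := sq_nonneg G
        have := sq_nonneg y
        have := sq_nonneg x
        positivity
      nlinarith [h5]
    refine ne_top_of_le_ne_top ?_ (ENNReal.tsum_le_tsum hbound)
    have hsum : Summable (fun j : ℕ => (36*G^2*((i:ℝ)+1)^2) * (1/((j:ℝ)+1)^2)) := by
      apply Summable.mul_left
      have h0 : Summable (fun j : ℕ => 1/((j:ℝ))^2) :=
        (Real.summable_one_div_nat_pow).2 (by norm_num)
      have h1 := (summable_nat_add_iff (f := fun j : ℕ => 1/((j:ℝ))^2) 1).2 h0
      refine h1.congr (fun j => ?_)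
      push_cast; ring
    rw [← ENNReal.ofReal_tsum_of_nonneg (fun j => by positivity) hsum]
    exact ENNReal.ofReal_ne_top
  set Bad := ⋃ i : ℕ, limsup (s i) atTop with hBad
  have hBad0 : μ Bad = 0 := measure_iUnion_null (fun i => hBC i)
  rw [ae_iff]
  refine measure_mono_null ?_ hBad0
  intro ω hω
  rw [Set.mem_setOf_eq] at hω
  by_contra hωBad
  apply hω
  -- ω avoids all the limsups
  have hnot : ∀ i, ∀ᶠ j in atTop, ω ∉ s i j := by
    intro i
    have hmem : ω ∉ limsup (s i) atTop := fun h => hωBad (Set.mem_iUnion.2 ⟨i, h⟩)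
    rw [mem_limsup_iff_frequently_mem] at hmem
    exact Filter.not_frequently.1 hmem
  set u : ℕ → ℝ := fun n => W n ω - M n with hu
  have hA : Tendsto (fun j : ℕ => u ((j+1)^2) / (((j:ℝ)+1)^2)) atTop (𝓝 0) := by
    rw [Metric.tendsto_atTop]
    intro ε hε
    obtain ⟨i, hi⟩ := exists_nat_one_div_lt hε
    obtain ⟨J, hJ⟩ := Filter.eventually_atTop.1 (hnot i)
    refine ⟨J, fun j hj => ?_⟩
    have h2 := hJ j hj
    rw [hsdef] at h2
    simp only [Set.mem_setOf_eq, not_le] at h2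
    rw [Real.dist_eq, sub_zero]
    have hx : (0:ℝ) < ((j:ℝ)+1)^2 := by positivity
    have habs : |u ((j+1)^2) / ((j:ℝ)+1)^2| = |u ((j+1)^2)| / ((j:ℝ)+1)^2 := by
      rw [abs_div, abs_of_pos hx]
    rw [habs]
    calc |u ((j+1)^2)| / ((j:ℝ)+1)^2 < (((j:ℝ)+1)^2/((i:ℝ)+1)) / ((j:ℝ)+1)^2 := by
          gcongr
      _ = 1/((i:ℝ)+1) := by field_simp
      _ < ε := hi
  have hebd : ∀ k, |e k| ≤ G := fun k => EN_abs_le hp hq (hG k)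
  have hLip : ∀ n, |u (n+1) - u n| ≤ 2*G := by
    intro n
    have hdiff : u (n+1) - u n = T n ω - e n := by
      rw [hu]
      show (W (n+1) ω - M (n+1)) - (W n ω - M n) = T n ω - e n
      rw [hWdef, hMdef]
      show ((∑ k ∈ Finset.range (n+1), T k ω) - ∑ k ∈ Finset.range (n+1), e k)
          - ((∑ k ∈ Finset.range n, T k ω) - ∑ k ∈ Finset.range n, e k) = T n ω - e n
      rw [Finset.sum_range_succ, Finset.sum_range_succ]
      ring
    rw [hdiff]
    calc |T n ω - e n| ≤ |T n ω| + |e n| := abs_sub _ _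
      _ ≤ G + G := add_le_add (hG n ω) (hebd n)
      _ = 2*G := by ring
  have hLipm : ∀ m n : ℕ, m ≤ n → |u n - u m| ≤ 2*G*((n:ℝ) - (m:ℝ)) := by
    intro m n hmn
    induction n with
    | zero =>
      obtain rfl : m = 0 := Nat.le_zero.1 hmn
      simp
    | succ n ih =>
      rcases Nat.lt_or_ge m (n+1) with h | h
      · have h' : m ≤ n := by omega
        calc |u (n+1) - u m| = |(u (n+1) - u n) + (u n - u m)| := by ring_nf
          _ ≤ |u (n+1) - u n| + |u n - u m| := abs_add_le _ _
          _ ≤ 2*G + 2*G*((n:ℝ) - (m:ℝ)) := add_le_add (hLip n) (ih h')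
          _ = 2*G*(((n:ℕ)+1:ℝ) - (m:ℝ)) := by ring
          _ = 2*G*(((n+1:ℕ):ℝ) - (m:ℝ)) := by push_cast; ring
      · obtain rfl : m = n + 1 := by omega
        simp
  have hG0' : (0:ℝ) ≤ 2*G := by linarith
  have hsqrt : Tendsto (fun n : ℕ => Nat.sqrt n) atTop atTop := by
    apply Filter.tendsto_atTop_atTop.2
    intro b
    exact ⟨b*b, fun n hn => Nat.le_sqrt.2 hn⟩
  have hA' : Tendsto (fun j : ℕ => |u (j^2)| / ((j:ℝ))^2) atTop (𝓝 0) := by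
    rw [← Filter.tendsto_add_atTop_iff_nat 1]
    have h1 : Tendsto (fun j : ℕ => |u ((j+1)^2) / (((j:ℝ)+1)^2)|) atTop (𝓝 0) := by
      have := hA.abs
      simpa using this
    refine h1.congr (fun j => ?_)
    have hx : (0:ℝ) < ((j:ℝ)+1)^2 := by positivity
    rw [abs_div, abs_of_pos hx]
    congr 1 <;> push_cast <;> ring
  have ht2 : Tendsto (fun j : ℕ => (4*G)/(j:ℝ)) atTop (𝓝 0) := by
    have h1 := tendsto_one_div_atTop_nhds_zero_nat.const_mul (4*G)
    simp only [mul_zero] at h1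
    refine h1.congr (fun j => ?_)
    rw [mul_one_div]
  have hgoal0 : Tendsto (fun n : ℕ => |u ((Nat.sqrt n)^2)| / ((Nat.sqrt n : ℝ))^2 +
      (4*G)/((Nat.sqrt n : ℝ))) atTop (𝓝 0) := by
    have t1 := hA'.comp hsqrt
    have t2' := ht2.comp hsqrt
    have := t1.add t2'
    simpa using this
  have hb : ∀ n : ℕ, 1 ≤ n → |u n / n| ≤
      |u ((Nat.sqrt n)^2)| / ((Nat.sqrt n : ℝ))^2 + (4*G)/((Nat.sqrt n : ℝ)) := by
    intro n hn
    set j := Nat.sqrt n with hj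
    have hj1 : 1 ≤ j := by rw [hj]; exact Nat.le_sqrt.2 (by omega)
    have hj2 : j^2 ≤ n := Nat.sqrt_le' n
    have hj3 : n < (j+1)^2 := Nat.lt_succ_sqrt' n
    have hn0 : (0:ℝ) < (n:ℝ) := by exact_mod_cast Nat.pos_of_ne_zero (by omega)
    have hjr : (0:ℝ) < (j:ℝ) := by exact_mod_cast hj1
    have hj2r : ((j:ℝ))^2 ≤ (n:ℝ) := by exact_mod_cast hj2
    have hdiff : |u n - u (j^2)| ≤ 2*G*((n:ℝ) - ((j^2:ℕ):ℝ)) := hLipm _ _ hj2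
    have hreal1 : ((n:ℝ) - ((j^2:ℕ):ℝ)) ≤ 2*(j:ℝ) := by
      have : n + 1 ≤ (j+1)^2 := hj3
      have hcast : ((n:ℝ) + 1) ≤ ((j:ℝ)+1)^2 := by exact_mod_cast this
      push_cast
      nlinarith
    have h1 : |u n| ≤ |u (j^2)| + 2*G*(2*(j:ℝ)) := by
      calc |u n| = |u (j^2) + (u n - u (j^2))| := by ring_nf
        _ ≤ |u (j^2)| + |u n - u (j^2)| := abs_add_le _ _
        _ ≤ |u (j^2)| + 2*G*((n:ℝ) - ((j^2:ℕ):ℝ)) := by linarith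
        _ ≤ |u (j^2)| + 2*G*(2*(j:ℝ)) := by nlinarith
    have habs : |u n / (n:ℝ)| = |u n| / (n:ℝ) := by rw [abs_div, abs_of_pos hn0]
    rw [habs]
    calc |u n| / (n:ℝ) ≤ (|u (j^2)| + 2*G*(2*(j:ℝ))) / (n:ℝ) := by gcongr
      _ = |u (j^2)|/(n:ℝ) + (4*G*(j:ℝ))/(n:ℝ) := by ring
      _ ≤ |u (j^2)|/((j:ℝ)^2) + (4*G*(j:ℝ))/((j:ℝ)^2) := by
          gcongr <;> first | positivity | exact hj2r
      _ = |u (j^2)|/((j:ℝ)^2) + (4*G)/(j:ℝ) := by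
          congr 1
          rw [pow_two, ← div_div, mul_div_assoc, div_self hjr.ne', mul_one]
  have habs0 : Tendsto (fun n : ℕ => |u n / (n:ℝ)|) atTop (𝓝 0) :=
    squeeze_zero' (Filter.eventually_atTop.2 ⟨1, fun n _ => abs_nonneg _⟩)
      (Filter.eventually_atTop.2 ⟨1, fun n hn => hb n hn⟩) hgoal0
  have hC : Tendsto (fun n : ℕ => u n / (n:ℝ)) atTop (𝓝 0) := by
    have hneg := habs0.neg
    rw [neg_zero] at hneg
    exact tendsto_of_tendsto_of_tendsto_of_le_of_le hneg habs0
      (fun n => neg_abs_le _) (fun n => le_abs_self _)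
  have hD : Tendsto (fun n : ℕ => M n / (n:ℝ)) atTop (𝓝 Λ) := by
    have hb2 : ∀ n : ℕ, 1 ≤ n → |M n / (n:ℝ) - Λ| ≤ K / (n:ℝ) := by
      intro n hn
      have hn0 : (0:ℝ) < (n:ℝ) := by exact_mod_cast Nat.pos_of_ne_zero (by omega)
      have h1 : M n / (n:ℝ) - Λ = (M n - Λ*(n:ℝ)) / (n:ℝ) := by field_simp
      rw [h1, abs_div, abs_of_pos hn0]
      gcongr
      exact hmean n
    have hK : Tendsto (fun n : ℕ => K / (n:ℝ)) atTop (𝓝 0) := by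
      have h1 := tendsto_one_div_atTop_nhds_zero_nat.const_mul K
      simp only [mul_zero] at h1
      refine h1.congr (fun j => ?_)
      rw [mul_one_div]
    have habsM : Tendsto (fun n : ℕ => |M n / (n:ℝ) - Λ|) atTop (𝓝 0) :=
      squeeze_zero' (Filter.eventually_atTop.2 ⟨1, fun n _ => abs_nonneg _⟩)
        (Filter.eventually_atTop.2 ⟨1, fun n hn => hb2 n hn⟩) hK
    have hsub : Tendsto (fun n : ℕ => M n / (n:ℝ) - Λ) atTop (𝓝 0) := by
      have hneg := habsM.neg
      rw [neg_zero] at hneg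
      exact tendsto_of_tendsto_of_tendsto_of_le_of_le hneg habsM
        (fun n => neg_abs_le _) (fun n => le_abs_self _)
    have := hsub.add_const Λ
    simpa using this
  have hfinal := hC.add hD
  rw [zero_add] at hfinal
  refine hfinal.congr (fun n => ?_)
  show u n / (n:ℝ) + M n / (n:ℝ) = (∑ k ∈ Finset.range n, T k ω) / (n:ℝ)
  rw [hu]
  show (W n ω - M n) / (n:ℝ) + M n / (n:ℝ) = (∑ k ∈ Finset.range n, T k ω) / (n:ℝ)
  rw [← add_div, sub_add_cancel]

end Stage5

section Stage6
variable {p q : ℝ}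

lemma par_two_mul_add_one (i : ℕ) : par (2*i+1) = i := by unfold par; omega

lemma mm_sum_rec (n : ℕ) : ∑ k ∈ Finset.range n, mm p q k =
    p * n + (q-p) * ∑ i ∈ Finset.range (n/2), mm p q i := by
  rw [sum_parity (mm p q) n]
  have h1 : ∀ i, mm p q (2*i) = p := fun i => mm_even ⟨i, by ring⟩
  have h2 : ∀ i, mm p q (2*i+1) = p + (q-p) * mm p q i := by
    intro i
    rw [mm_odd (by simp [parity_simps]), par_two_mul_add_one]
  rw [Finset.sum_congr rfl (fun i _ => h1 i), Finset.sum_congr rfl (fun i _ => h2 i)]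
  rw [Finset.sum_add_distrib, Finset.sum_const, Finset.sum_const, ← Finset.mul_sum]
  rw [Finset.card_range, Finset.card_range, nsmul_eq_mul, nsmul_eq_mul]
  have hcast : (((n+1)/2 : ℕ):ℝ) + ((n/2 : ℕ):ℝ) = (n:ℝ) := by
    have : (n+1)/2 + n/2 = n := by omega
    exact_mod_cast congrArg (Nat.cast : ℕ → ℝ) this
  linear_combination p * hcast

lemma mm_sum_bound (hp : p ∈ Set.Ioo (0:ℝ) 1) (hq : q ∈ Set.Ioo (0:ℝ) 1) :
    ∀ n : ℕ, |(∑ k ∈ Finset.range n, mm p q k) - (2*p/(2-(q-p))) * n| ≤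
      (|2*p/(2-(q-p))|+1)/(1-|q-p|) := by
  have habs : |q - p| < 1 := by
    rw [abs_lt]; constructor <;> [linarith [hq.1, hp.2]; linarith [hq.2, hp.1]]
  have h1t : (0:ℝ) < 1 - |q-p| := by linarith
  have h2t : (0:ℝ) < 2 - (q-p) := by
    have := le_abs_self (q-p); linarith
  set t : ℝ := q - p with htdef
  set s0 : ℝ := 2*p/(2-t) with hs0def
  set KB : ℝ := (|s0|+1)/(1-|t|) with hKBdef
  have hKB0 : 0 ≤ KB := by positivity
  have hKBid : KB*(1-|t|) = |s0|+1 := by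
    rw [hKBdef]; field_simp
  intro n
  induction n using Nat.strong_induction_on with
  | _ n ih =>
  rcases Nat.eq_zero_or_pos n with rfl | hn
  · simpa using hKB0
  set m := n/2 with hmdef
  have hmn : m < n := by omega
  have ihm := ih m hmn
  have hs : p * (n:ℝ) + t * (s0 * ((n:ℝ)/2)) = s0 * n := by
    rw [hs0def]; field_simp; ring
  have heq : (∑ k ∈ Finset.range n, mm p q k) - s0*n =
      t*((∑ i ∈ Finset.range m, mm p q i) - s0*m) + t*s0*((m:ℝ) - (n:ℝ)/2) := by
    rw [mm_sum_rec n, ← hmdef]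
    linear_combination hs
  have hm2 : |(m:ℝ) - (n:ℝ)/2| ≤ 1 := by
    have h1 : 2*m ≤ n := by omega
    have h2 : n ≤ 2*m + 1 := by omega
    have h1' : 2*(m:ℝ) ≤ (n:ℝ) := by exact_mod_cast h1
    have h2' : (n:ℝ) ≤ 2*(m:ℝ) + 1 := by exact_mod_cast h2
    rw [abs_le]; constructor <;> linarith
  calc |(∑ k ∈ Finset.range n, mm p q k) - s0*n|
      = |t*((∑ i ∈ Finset.range m, mm p q i) - s0*m) + t*s0*((m:ℝ) - (n:ℝ)/2)| := by rw [heq]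
    _ ≤ |t*((∑ i ∈ Finset.range m, mm p q i) - s0*m)| + |t*s0*((m:ℝ) - (n:ℝ)/2)| := abs_add_le _ _
    _ = |t| * |(∑ i ∈ Finset.range m, mm p q i) - s0*m| + |t| * |s0| * |(m:ℝ) - (n:ℝ)/2| := by
        rw [abs_mul, abs_mul, abs_mul]
    _ ≤ |t| * KB + |t| * |s0| * 1 := by
        refine add_le_add (mul_le_mul_of_nonneg_left ihm (abs_nonneg _)) ?_
        exact mul_le_mul_of_nonneg_left hm2 (by positivity)
    _ ≤ KB := by nlinarith [abs_nonneg t, abs_nonneg s0, hKBid]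

theorem slln_lam (hp : p ∈ Set.Ioo (0:ℝ) 1) (hq : q ∈ Set.Ioo (0:ℝ) 1)
    (μ : Measure (ℕ → Fin 2))
    (hcyl : ∀ (ω : ℕ → Fin 2) (n : ℕ), 1 ≤ n → μ (cyl ω n) = ENNReal.ofReal (cylMass p q ω n))
    (lam0 lam1 : ℝ) :
    ∀ᵐ ω ∂μ, Tendsto (fun n => (∑ k ∈ Finset.range n,
        (if ω k = 1 then lam1 else lam0)) / n) atTop
      (𝓝 (lam0 + (lam1-lam0) * (2*p/(2-(q-p))))) := by
  have hG : ∀ (k : ℕ) (ω : ℕ → Fin 2), |(if ω k = 1 then lam1 else lam0)| ≤ |lam0| + |lam1| := by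
    intro k ω
    split_ifs <;> [linarith [abs_nonneg lam0]; linarith [abs_nonneg lam1]]
  have hloc : ∀ k, ALoc (dep k) (fun ω => if ω k = 1 then lam1 else lam0) := by
    intro k ω ω' hk
    show (if ω k = 1 then lam1 else lam0) = (if ω' k = 1 then lam1 else lam0)
    rw [hk k (mem_dep_self k)]
  have hmean : ∀ n : ℕ, |(∑ k ∈ Finset.range n,
      EN p q (2*k+2) (fun ω => if ω k = 1 then lam1 else lam0)) -
      (lam0 + (lam1-lam0) * (2*p/(2-(q-p)))) * n| ≤
      |lam1-lam0| * ((|2*p/(2-(q-p))|+1)/(1-|q-p|)) := by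
    intro n
    have heval : ∀ k, EN p q (2*k+2) (fun ω => if ω k = 1 then lam1 else lam0) =
        lam0 + (lam1 - lam0) * mm p q k := by
      intro k
      have h := EN_eval hp hq k (fun x => if x = 1 then lam1 else lam0) (2*k+2) (by omega)
      simpa using h
    rw [Finset.sum_congr rfl (fun k _ => heval k)]
    rw [Finset.sum_add_distrib, Finset.sum_const, ← Finset.mul_sum, Finset.card_range,
      nsmul_eq_mul]
    have hB := mm_sum_bound hp hq n
    calc |((n:ℝ) * lam0 + (lam1-lam0) * ∑ k ∈ Finset.range n, mm p q k) -
          (lam0 + (lam1-lam0) * (2*p/(2-(q-p)))) * n|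
        = |lam1-lam0| * |(∑ k ∈ Finset.range n, mm p q k) - (2*p/(2-(q-p))) * n| := by
          rw [← abs_mul]; congr 1; ring
      _ ≤ |lam1-lam0| * ((|2*p/(2-(q-p))|+1)/(1-|q-p|)) :=
          mul_le_mul_of_nonneg_left hB (abs_nonneg _)
  exact slln hp hq μ hcyl _ _ hG hloc _ _ hmean

lemma Ffac_cases (j : ℕ) (ω : ℕ → Fin 2) :
    Ffac p q j ω = p ∨ Ffac p q j ω = 1 - p ∨ Ffac p q j ω = q ∨ Ffac p q j ω = 1 - q := by
  unfold Ffac P1 P2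
  split_ifs <;> tauto

lemma Ffac_pos (hp : p ∈ Set.Ioo (0:ℝ) 1) (hq : q ∈ Set.Ioo (0:ℝ) 1)
    (j : ℕ) (ω : ℕ → Fin 2) : 0 < Ffac p q j ω := by
  rcases Ffac_cases (p := p) (q := q) j ω with h|h|h|h <;> rw [h] <;>
    [exact hp.1; linarith [hp.2]; exact hq.1; linarith [hq.2]]

theorem slln_logmass (hp : p ∈ Set.Ioo (0:ℝ) 1) (hq : q ∈ Set.Ioo (0:ℝ) 1)
    (μ : Measure (ℕ → Fin 2))
    (hcyl : ∀ (ω : ℕ → Fin 2) (n : ℕ), 1 ≤ n → μ (cyl ω n) = ENNReal.ofReal (cylMass p q ω n)) :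
    ∀ᵐ ω ∂μ, Tendsto (fun n => (Real.log (cylMass p q ω n)) / n) atTop
      (𝓝 (((-Hent p) + ((-Hent p) + ((-Hent q) - (-Hent p)) * (2*p/(2-(q-p)))))/2)) := by
  classical
  set G2 : ℝ := |Real.log p| + |Real.log (1-p)| + |Real.log q| + |Real.log (1-q)| with hG2
  have hG : ∀ (j : ℕ) (ω : ℕ → Fin 2), |Real.log (Ffac p q j ω)| ≤ G2 := by
    intro j ω
    have a1 := abs_nonneg (Real.log p)
    have a2 := abs_nonneg (Real.log (1-p))
    have a3 := abs_nonneg (Real.log q)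
    have a4 := abs_nonneg (Real.log (1-q))
    rcases Ffac_cases (p := p) (q := q) j ω with h|h|h|h <;> rw [h, hG2] <;>
      [linarith [le_abs_self (Real.log p)]; linarith [le_abs_self (Real.log (1-p))];
       linarith [le_abs_self (Real.log q)]; linarith [le_abs_self (Real.log (1-q))]]
  have hloc : ∀ j, ALoc (dep j) (fun ω => Real.log (Ffac p q j ω)) := by
    intro j ω ω' hk
    show Real.log (Ffac p q j ω) = Real.log (Ffac p q j ω')
    by_cases hev : Even j
    · unfold Ffac
      rw [if_pos hev, if_pos hev, hk j (mem_dep_self j)]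
    · rw [Ffac_local (hk j (mem_dep_self j)) (hk (par j) (mem_dep_par hev))]
  have heval : ∀ j, EN p q (2*j+2) (fun ω => Real.log (Ffac p q j ω)) =
      (fun j => if Even j then -(Hent p)
        else (-(Hent p)) + ((-(Hent q)) - (-(Hent p))) * mm p q (par j)) j := by
    intro j
    by_cases hev : Even j
    · simp only [if_pos hev]
      have hcongr : (fun ω : ℕ → Fin 2 => Real.log (Ffac p q j ω)) =
          (fun ω : ℕ → Fin 2 => (fun x : Fin 2 => Real.log (P1 p x)) (ω j)) := by
        funext ω
        show Real.log (Ffac p q j ω) = Real.log (P1 p (ω j))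
        rw [Ffac, if_pos hev]
      rw [hcongr, EN_eval hp hq j (fun x => Real.log (P1 p x)) (2*j+2) (by omega), mm_even hev]
      unfold P1 Hent
      norm_num
      ring
    · simp only [if_neg hev]
      have hcongr : (fun ω : ℕ → Fin 2 => Real.log (Ffac p q j ω)) =
          (fun ω : ℕ → Fin 2 => (fun (w x : Fin 2) => Real.log (P2 p q w x)) (ω (par j)) (ω j)) := by
        funext ω
        show Real.log (Ffac p q j ω) = Real.log (P2 p q (ω (par j)) (ω j))
        rw [Ffac, if_neg hev]
      rw [hcongr, EN_eval2 hp hq j hev (fun w x => Real.log (P2 p q w x)) (2*j+2) (by omega)]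
      unfold P2 Hent
      norm_num
  set s0 : ℝ := 2*p/(2-(q-p)) with hs0
  set KB : ℝ := (|s0|+1)/(1-|q-p|) with hKBd
  set D : ℝ := (-(Hent q)) - (-(Hent p)) with hD
  set L2 : ℝ := ((-Hent p) + ((-Hent p) + D * s0))/2 with hL2
  have hmean : ∀ n : ℕ, |(∑ j ∈ Finset.range n,
      EN p q (2*j+2) (fun ω => Real.log (Ffac p q j ω))) - L2 * n| ≤
      |Hent p| + |Hent p| + |D| * (KB + |s0|) := by
    intro n
    rw [Finset.sum_congr rfl (fun j _ => heval j)]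
    rw [sum_parity _ n]
    set m1 := (n+1)/2 with hm1
    set m2 := n/2 with hm2
    have hg1 : ∀ i ∈ Finset.range m1, (fun j => if Even j then -(Hent p)
        else (-(Hent p)) + D * mm p q (par j)) (2*i) = -(Hent p) := by
      intro i _
      show (if Even (2*i) then -(Hent p) else (-(Hent p)) + D * mm p q (par (2*i))) = -(Hent p)
      exact if_pos ⟨i, by ring⟩
    have hg2 : ∀ i ∈ Finset.range m2, (fun j => if Even j then -(Hent p)
        else (-(Hent p)) + D * mm p q (par j)) (2*i+1) =
        (-(Hent p)) + D * mm p q i := by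
      intro i _
      show (if Even (2*i+1) then -(Hent p) else (-(Hent p)) + D * mm p q (par (2*i+1))) =
        (-(Hent p)) + D * mm p q i
      rw [if_neg (by simp [parity_simps]), par_two_mul_add_one]
    rw [Finset.sum_congr rfl hg1, Finset.sum_congr rfl hg2]
    rw [Finset.sum_const, Finset.card_range, nsmul_eq_mul, Finset.sum_add_distrib,
      Finset.sum_const, Finset.card_range, nsmul_eq_mul, ← Finset.mul_sum]
    set B : ℝ := ∑ i ∈ Finset.range m2, mm p q i with hB
    have hBb : |B - s0 * m2| ≤ KB := mm_sum_bound hp hq m2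
    have hm1b : |(m1:ℝ) - (n:ℝ)/2| ≤ 1 := by
      have h1 : n ≤ 2*m1 := by omega
      have h2 : 2*m1 ≤ n+1 := by omega
      have h1' : (n:ℝ) ≤ 2*(m1:ℝ) := by exact_mod_cast h1
      have h2' : 2*(m1:ℝ) ≤ (n:ℝ)+1 := by exact_mod_cast h2
      rw [abs_le]; constructor <;> linarith
    have hm2b : |(m2:ℝ) - (n:ℝ)/2| ≤ 1 := by
      have h1 : 2*m2 ≤ n := by omega
      have h2 : n ≤ 2*m2+1 := by omega
      have h1' : 2*(m2:ℝ) ≤ (n:ℝ) := by exact_mod_cast h1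
      have h2' : (n:ℝ) ≤ 2*(m2:ℝ)+1 := by exact_mod_cast h2
      rw [abs_le]; constructor <;> linarith
    have hiden : ((m1:ℝ) * (-(Hent p)) + ((m2:ℝ) * (-(Hent p)) + D * B)) - L2 * n =
        (-(Hent p))*((m1:ℝ) - (n:ℝ)/2) + (-(Hent p))*((m2:ℝ) - (n:ℝ)/2) +
        (D*(B - s0*m2) + D*s0*((m2:ℝ) - (n:ℝ)/2)) := by
      rw [hL2]; ring
    rw [hiden]
    have b1 : |(-(Hent p))*((m1:ℝ) - (n:ℝ)/2)| ≤ |Hent p| := by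
      rw [abs_mul, abs_neg]
      calc |Hent p| * |(m1:ℝ) - (n:ℝ)/2| ≤ |Hent p| * 1 :=
          mul_le_mul_of_nonneg_left hm1b (abs_nonneg _)
        _ = |Hent p| := mul_one _
    have b2 : |(-(Hent p))*((m2:ℝ) - (n:ℝ)/2)| ≤ |Hent p| := by
      rw [abs_mul, abs_neg]
      calc |Hent p| * |(m2:ℝ) - (n:ℝ)/2| ≤ |Hent p| * 1 :=
          mul_le_mul_of_nonneg_left hm2b (abs_nonneg _)
        _ = |Hent p| := mul_one _
    have b3 : |D*(B - s0*m2) + D*s0*((m2:ℝ) - (n:ℝ)/2)| ≤ |D| * (KB + |s0|) := by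
      calc |D*(B - s0*m2) + D*s0*((m2:ℝ) - (n:ℝ)/2)|
          ≤ |D*(B - s0*m2)| + |D*s0*((m2:ℝ) - (n:ℝ)/2)| := abs_add_le _ _
        _ = |D| * |B - s0*m2| + |D| * |s0| * |(m2:ℝ) - (n:ℝ)/2| := by
            rw [abs_mul, abs_mul, abs_mul]
        _ ≤ |D| * KB + |D| * |s0| * 1 := by
            refine add_le_add (mul_le_mul_of_nonneg_left hBb (abs_nonneg _)) ?_
            exact mul_le_mul_of_nonneg_left hm2b (by positivity)
        _ = |D| * (KB + |s0|) := by ring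
    calc |(-(Hent p))*((m1:ℝ) - (n:ℝ)/2) + (-(Hent p))*((m2:ℝ) - (n:ℝ)/2) +
          (D*(B - s0*m2) + D*s0*((m2:ℝ) - (n:ℝ)/2))|
        ≤ |(-(Hent p))*((m1:ℝ) - (n:ℝ)/2) + (-(Hent p))*((m2:ℝ) - (n:ℝ)/2)| +
          |D*(B - s0*m2) + D*s0*((m2:ℝ) - (n:ℝ)/2)| := abs_add_le _ _
      _ ≤ (|(-(Hent p))*((m1:ℝ) - (n:ℝ)/2)| + |(-(Hent p))*((m2:ℝ) - (n:ℝ)/2)|) +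
          |D*(B - s0*m2) + D*s0*((m2:ℝ) - (n:ℝ)/2)| := by
          refine add_le_add_left (abs_add_le _ _) _
      _ ≤ |Hent p| + |Hent p| + |D| * (KB + |s0|) := by
          have := add_le_add (add_le_add b1 b2) b3
          linarith
  have main := slln hp hq μ hcyl (fun j ω => Real.log (Ffac p q j ω)) G2 hG hloc L2 _ hmean
  refine main.mono (fun ω hω => ?_)
  refine hω.congr (fun n => ?_)
  congr 1
  rw [cylMass_eq_prod, Real.log_prod (fun j _ => (Ffac_pos hp hq j ω).ne')]

end Stage6

section Geometry
open scoped Topology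
variable {lam0 lam1 : ℝ}

noncomputable def lamSum (lam0 lam1 : ℝ) (ω : ℕ → Fin 2) (n : ℕ) : ℝ :=
  ∑ k ∈ Finset.range n, (if ω k = 1 then lam1 else lam0)

lemma prefixIter_succ (ω : ℕ → Fin 2) (n : ℕ) (x : ℝ) :
    prefixIter lam0 lam1 ω (n+1) x = prefixIter lam0 lam1 ω n (fdig lam0 lam1 (ω n) x) := rfl

lemma fd_sub (i : Fin 2) (x y : ℝ) : fdig lam0 lam1 i x - fdig lam0 lam1 i y =
    Real.exp (-(if i = 1 then lam1 else lam0)) * (x - y) := by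
  by_cases h : i = 1 <;> simp [fdig, h] <;> ring

section withpos

lemma exp_lt_one_0 (h0 : 0 < lam0) : Real.exp (-lam0) < 1 := by
  calc Real.exp (-lam0) < Real.exp 0 := Real.exp_lt_exp.2 (by linarith)
    _ = 1 := Real.exp_zero

lemma exp_lt_one_1 (h1 : 0 < lam1) : Real.exp (-lam1) < 1 := by
  calc Real.exp (-lam1) < Real.exp 0 := Real.exp_lt_exp.2 (by linarith)
    _ = 1 := Real.exp_zero

lemma fd_mem (h0 : 0 < lam0) (h1 : 0 < lam1) (i : Fin 2) {x : ℝ} (hx : x ∈ Set.Icc (0:ℝ) 1) :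
    fdig lam0 lam1 i x ∈ Set.Icc (0:ℝ) 1 := by
  obtain ⟨hx0, hx1⟩ := hx
  have e0 := Real.exp_pos (-lam0)
  have e1 := Real.exp_pos (-lam1)
  have l0 := exp_lt_one_0 h0
  have l1 := exp_lt_one_1 h1
  by_cases h : i = 1 <;> simp only [fdig, h, if_true, if_false] <;> constructor <;> nlinarith

lemma prefixIter_sub (ω : ℕ → Fin 2) : ∀ (n : ℕ) (x y : ℝ),
    prefixIter lam0 lam1 ω n x - prefixIter lam0 lam1 ω n y =
      Real.exp (-(lamSum lam0 lam1 ω n)) * (x - y) := by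
  intro n
  induction n with
  | zero => intro x y; simp [prefixIter, lamSum]
  | succ n ih =>
    intro x y
    rw [prefixIter_succ, prefixIter_succ, ih, fd_sub]
    rw [show lamSum lam0 lam1 ω (n+1) = lamSum lam0 lam1 ω n +
      (if ω n = 1 then lam1 else lam0) from Finset.sum_range_succ _ n]
    rw [show -(lamSum lam0 lam1 ω n + (if ω n = 1 then lam1 else lam0)) =
      -(lamSum lam0 lam1 ω n) + -(if ω n = 1 then lam1 else lam0) by ring, Real.exp_add]
    ring

lemma prefixIter_mem (h0 : 0 < lam0) (h1 : 0 < lam1) (ω : ℕ → Fin 2) : ∀ (n : ℕ) {x : ℝ}, x ∈ Set.Icc (0:ℝ) 1 →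
    prefixIter lam0 lam1 ω n x ∈ Set.Icc (0:ℝ) 1 := by
  intro n
  induction n with
  | zero => intro x hx; exact hx
  | succ n ih => intro x hx; exact ih (fd_mem h0 h1 _ hx)

lemma prefixIter_mono (h0 : 0 < lam0) (h1 : 0 < lam1) (ω : ℕ → Fin 2) (n : ℕ) {x y : ℝ} (hxy : x ≤ y) :
    prefixIter lam0 lam1 ω n x ≤ prefixIter lam0 lam1 ω n y := by
  have h := prefixIter_sub (lam0 := lam0) (lam1 := lam1) ω n y x
  have := Real.exp_pos (-(lamSum lam0 lam1 ω n))
  nlinarith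

end withpos

lemma prefixIter_agree {ω τ : ℕ → Fin 2} : ∀ n, (∀ k < n, ω k = τ k) →
    ∀ x, prefixIter lam0 lam1 ω n x = prefixIter lam0 lam1 τ n x := by
  intro n
  induction n with
  | zero => intro _ x; rfl
  | succ n ih =>
    intro h x
    rw [prefixIter_succ, prefixIter_succ, h n (by omega)]
    exact ih (fun k hk => h k (by omega)) _

lemma prefixIter_split (ω : ℕ → Fin 2) (n : ℕ) : ∀ (m : ℕ) (x : ℝ),
    prefixIter lam0 lam1 ω (n + m) x =
      prefixIter lam0 lam1 ω n (prefixIter lam0 lam1 (fun k => ω (n + k)) m x) := by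
  intro m
  induction m with
  | zero => intro x; rfl
  | succ m ih =>
    intro x
    show prefixIter lam0 lam1 ω ((n + m) + 1) x = _
    rw [prefixIter_succ, ih, prefixIter_succ]

lemma fd_cont (i : Fin 2) : Continuous (fdig lam0 lam1 i) := by
  by_cases h : i = 1
  · have e : fdig lam0 lam1 i = fun x => Real.exp (-lam1) * x + 1 - Real.exp (-lam1) := by
      funext x; simp [fdig, h]
    rw [e]; continuity
  · have e : fdig lam0 lam1 i = fun x => Real.exp (-lam0) * x := by
      funext x; simp [fdig, h]
    rw [e]; continuity

lemma prefixIter_cont (ω : ℕ → Fin 2) : ∀ n, Continuous (prefixIter lam0 lam1 ω n) := by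
  intro n
  induction n with
  | zero => exact continuous_id
  | succ n ih => exact ih.comp (fd_cont (ω n))

section withpos2

lemma prefixIter_zero_mono (h0 : 0 < lam0) (h1 : 0 < lam1) (ω : ℕ → Fin 2) :
    Monotone (fun n => prefixIter lam0 lam1 ω n 0) := by
  apply monotone_nat_of_le_succ
  intro n
  show prefixIter lam0 lam1 ω n 0 ≤ prefixIter lam0 lam1 ω (n+1) 0
  rw [prefixIter_succ]
  exact prefixIter_mono h0 h1 ω n (fd_mem h0 h1 (ω n) (by norm_num)).1

lemma piMap_tendsto (h0 : 0 < lam0) (h1 : 0 < lam1) (ω : ℕ → Fin 2) :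
    Tendsto (fun n => prefixIter lam0 lam1 ω n 0) atTop (𝓝 (piMap lam0 lam1 ω)) := by
  have hbdd : BddAbove (Set.range (fun n => prefixIter lam0 lam1 ω n 0)) := by
    refine ⟨1, ?_⟩
    rintro y ⟨n, rfl⟩
    exact (prefixIter_mem h0 h1 ω n (by norm_num : (0:ℝ) ∈ Set.Icc (0:ℝ) 1)).2
  have h := tendsto_atTop_ciSup (prefixIter_zero_mono h0 h1 ω) hbdd
  have heq : piMap lam0 lam1 ω = ⨆ n, prefixIter lam0 lam1 ω n 0 := h.limUnder_eq
  rw [heq]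
  exact h

lemma piMap_mem (h0 : 0 < lam0) (h1 : 0 < lam1) (ω : ℕ → Fin 2) (n : ℕ) :
    piMap lam0 lam1 ω ∈ Set.Icc (prefixIter lam0 lam1 ω n 0) (prefixIter lam0 lam1 ω n 1) := by
  constructor
  · refine ge_of_tendsto (piMap_tendsto h0 h1 ω) ?_
    refine Filter.eventually_atTop.2 ⟨n, fun m hm => ?_⟩
    exact prefixIter_zero_mono h0 h1 ω hm
  · refine le_of_tendsto (piMap_tendsto h0 h1 ω) ?_
    refine Filter.eventually_atTop.2 ⟨n, fun m hm => ?_⟩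
    obtain ⟨r, rfl⟩ : ∃ r, m = n + r := ⟨m - n, by omega⟩
    rw [prefixIter_split]
    refine prefixIter_mono h0 h1 ω n ?_
    exact (prefixIter_mem h0 h1 _ r (by norm_num : (0:ℝ) ∈ Set.Icc (0:ℝ) 1)).2

lemma piMap_mem_cyl (h0 : 0 < lam0) (h1 : 0 < lam1) {ω σ : ℕ → Fin 2} {n : ℕ} (hσ : σ ∈ cyl ω n) :
    piMap lam0 lam1 σ ∈
      Set.Icc (prefixIter lam0 lam1 ω n 0) (prefixIter lam0 lam1 ω n 1) := by
  have h := piMap_mem h0 h1 σ n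
  rwa [prefixIter_agree n (fun k hk => hσ k hk) 0,
    prefixIter_agree n (fun k hk => hσ k hk) 1] at h

lemma prefixIter_zero_seq (τ : ℕ → Fin 2) (hτ : ∀ k, τ k = 0) :
    ∀ m, prefixIter lam0 lam1 τ m 0 = 0 := by
  intro m
  induction m with
  | zero => rfl
  | succ m ih =>
    rw [prefixIter_succ]
    have : fdig lam0 lam1 (τ m) 0 = 0 := by rw [hτ m]; simp [fdig]
    rw [this, ih]

lemma piMap_zero_seq (h0 : 0 < lam0) (h1 : 0 < lam1) (τ : ℕ → Fin 2) (hτ : ∀ k, τ k = 0) : piMap lam0 lam1 τ = 0 := by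
  have h := piMap_tendsto h0 h1 τ
  have h2 : Tendsto (fun m => prefixIter lam0 lam1 τ m 0) atTop (𝓝 0) := by
    refine tendsto_const_nhds.congr (fun m => ?_)
    rw [prefixIter_zero_seq τ hτ m]
  exact tendsto_nhds_unique h h2

lemma prefixIter_one_seq (τ : ℕ → Fin 2) (hτ : ∀ k, τ k = 1) :
    ∀ m, prefixIter lam0 lam1 τ m 0 = 1 - (Real.exp (-lam1))^m := by
  intro m
  induction m with
  | zero =>
    show (0:ℝ) = 1 - (Real.exp (-lam1))^0
    norm_num
  | succ m ih =>
    have hsplit := prefixIter_split (lam0 := lam0) (lam1 := lam1) τ 1 m 0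
    have h1m : 1 + m = m + 1 := by omega
    rw [h1m] at hsplit
    have htail : ∀ x, prefixIter lam0 lam1 (fun k => τ (1 + k)) m x =
        prefixIter lam0 lam1 τ m x :=
      fun x => prefixIter_agree m (fun k _ => (hτ (1+k)).trans (hτ k).symm) x
    rw [hsplit, htail, ih]
    show prefixIter lam0 lam1 τ 0 (fdig lam0 lam1 (τ 0) (1 - Real.exp (-lam1) ^ m)) = _
    rw [hτ 0]
    show fdig lam0 lam1 1 (1 - Real.exp (-lam1) ^ m) = _
    simp only [fdig, if_true]
    rw [pow_succ]
    ring

lemma piMap_one_seq (h0 : 0 < lam0) (h1 : 0 < lam1) (τ : ℕ → Fin 2) (hτ : ∀ k, τ k = 1) : piMap lam0 lam1 τ = 1 := by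
  have h := piMap_tendsto h0 h1 τ
  have h2 : Tendsto (fun m => prefixIter lam0 lam1 τ m 0) atTop (𝓝 1) := by
    have hpow : Tendsto (fun m : ℕ => (Real.exp (-lam1))^m) atTop (𝓝 0) :=
      tendsto_pow_atTop_nhds_zero_of_lt_one (le_of_lt (Real.exp_pos _)) (exp_lt_one_1 h1)
    have := hpow.const_sub 1
    rw [sub_zero] at this
    refine this.congr (fun m => ?_)
    rw [prefixIter_one_seq τ hτ m]
  exact tendsto_nhds_unique h h2

lemma piMap_left_endpoint (h0 : 0 < lam0) (h1 : 0 < lam1) (ω : ℕ → Fin 2) (n : ℕ) :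
    piMap lam0 lam1 (fun k => if k < n then ω k else 0) = prefixIter lam0 lam1 ω n 0 := by
  set σ : ℕ → Fin 2 := fun k => if k < n then ω k else 0 with hσ
  have hagree : ∀ k < n, σ k = ω k := fun k hk => if_pos hk
  have h := piMap_tendsto h0 h1 σ
  have h2 : Tendsto (fun m => prefixIter lam0 lam1 σ m 0) atTop
      (𝓝 (prefixIter lam0 lam1 ω n 0)) := by
    refine tendsto_const_nhds.congr' ?_
    refine Filter.eventually_atTop.2 ⟨n, fun m hm => ?_⟩
    obtain ⟨r, rfl⟩ : ∃ r, m = n + r := ⟨m - n, by omega⟩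
    have htail : prefixIter lam0 lam1 (fun k => σ (n + k)) r 0 = 0 := by
      refine prefixIter_zero_seq _ (fun k => ?_) r
      show (if n + k < n then ω (n+k) else 0) = 0
      rw [if_neg (by omega)]
    show prefixIter lam0 lam1 ω n 0 = prefixIter lam0 lam1 σ (n + r) 0
    rw [prefixIter_split, htail]
    exact (prefixIter_agree n hagree 0).symm
  exact tendsto_nhds_unique h h2

lemma piMap_right_endpoint (h0 : 0 < lam0) (h1 : 0 < lam1) (ω : ℕ → Fin 2) (n : ℕ) :
    piMap lam0 lam1 (fun k => if k < n then ω k else 1) = prefixIter lam0 lam1 ω n 1 := by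
  set σ : ℕ → Fin 2 := fun k => if k < n then ω k else 1 with hσ
  have hagree : ∀ k < n, σ k = ω k := fun k hk => if_pos hk
  have h := piMap_tendsto h0 h1 σ
  have h2 : Tendsto (fun m => prefixIter lam0 lam1 σ m 0) atTop
      (𝓝 (prefixIter lam0 lam1 ω n 1)) := by
    have hseq : ∀ m, prefixIter lam0 lam1 σ (n + m) 0 =
        prefixIter lam0 lam1 ω n (1 - (Real.exp (-lam1))^m) := by
      intro m
      rw [prefixIter_split]
      have htail : prefixIter lam0 lam1 (fun k => σ (n + k)) m 0 =
          1 - (Real.exp (-lam1))^m := by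
        refine prefixIter_one_seq _ (fun k => ?_) m
        show (if n + k < n then ω (n+k) else 1) = 1
        rw [if_neg (by omega)]
      rw [htail]
      exact prefixIter_agree n hagree _
    have hpow : Tendsto (fun m : ℕ => 1 - (Real.exp (-lam1))^m) atTop (𝓝 1) := by
      have hp : Tendsto (fun m : ℕ => (Real.exp (-lam1))^m) atTop (𝓝 0) :=
        tendsto_pow_atTop_nhds_zero_of_lt_one (le_of_lt (Real.exp_pos _)) (exp_lt_one_1 h1)
      have := hp.const_sub 1
      rwa [sub_zero] at this
    have hcomp : Tendsto (fun m => prefixIter lam0 lam1 σ (n + m) 0) atTop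
        (𝓝 (prefixIter lam0 lam1 ω n 1)) := by
      have hc := ((prefixIter_cont (lam0 := lam0) (lam1 := lam1) ω n).tendsto 1).comp hpow
      refine hc.congr (fun m => ?_)
      exact (hseq m).symm
    have hcomp' : Tendsto (fun m => prefixIter lam0 lam1 σ (m + n) 0) atTop
        (𝓝 (prefixIter lam0 lam1 ω n 1)) := by
      refine hcomp.congr' ?_
      filter_upwards [Filter.eventually_atTop.2 ⟨0, fun m _ => trivial⟩] with m _
      rw [Nat.add_comm]
    exact (Filter.tendsto_add_atTop_iff_nat (f := fun m => prefixIter lam0 lam1 σ m 0) n).1 hcomp'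
  exact tendsto_nhds_unique h h2

lemma image_subset_Icc (h0 : 0 < lam0) (h1 : 0 < lam1) (ω : ℕ → Fin 2) (n : ℕ) :
    piMap lam0 lam1 '' cyl ω n ⊆
      Set.Icc (prefixIter lam0 lam1 ω n 0) (prefixIter lam0 lam1 ω n 1) := by
  rintro x ⟨σ, hσ, rfl⟩
  exact piMap_mem_cyl h0 h1 hσ

lemma left_endpoint_mem (h0 : 0 < lam0) (h1 : 0 < lam1) (ω : ℕ → Fin 2) (n : ℕ) :
    prefixIter lam0 lam1 ω n 0 ∈ piMap lam0 lam1 '' cyl ω n := by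
  refine ⟨fun k => if k < n then ω k else 0, fun k hk => if_pos hk,
    piMap_left_endpoint h0 h1 ω n⟩

lemma right_endpoint_mem (h0 : 0 < lam0) (h1 : 0 < lam1) (ω : ℕ → Fin 2) (n : ℕ) :
    prefixIter lam0 lam1 ω n 1 ∈ piMap lam0 lam1 '' cyl ω n := by
  refine ⟨fun k => if k < n then ω k else 1, fun k hk => if_pos hk,
    piMap_right_endpoint h0 h1 ω n⟩

lemma diam_image (h0 : 0 < lam0) (h1 : 0 < lam1) (ω : ℕ → Fin 2) (n : ℕ) :
    Metric.diam (piMap lam0 lam1 '' cyl ω n) = Real.exp (-(lamSum lam0 lam1 ω n)) := by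
  have hsub := image_subset_Icc h0 h1 ω n
  have hsublen : prefixIter lam0 lam1 ω n 1 - prefixIter lam0 lam1 ω n 0 =
      Real.exp (-(lamSum lam0 lam1 ω n)) := by
    rw [prefixIter_sub]; ring
  have hle : prefixIter lam0 lam1 ω n 0 ≤ prefixIter lam0 lam1 ω n 1 :=
    prefixIter_mono h0 h1 ω n (by norm_num)
  apply le_antisymm
  · calc Metric.diam (piMap lam0 lam1 '' cyl ω n)
        ≤ Metric.diam (Set.Icc (prefixIter lam0 lam1 ω n 0) (prefixIter lam0 lam1 ω n 1)) :=
          Metric.diam_mono hsub (Metric.isBounded_Icc _ _)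
      _ = prefixIter lam0 lam1 ω n 1 - prefixIter lam0 lam1 ω n 0 := Real.diam_Icc hle
      _ = Real.exp (-(lamSum lam0 lam1 ω n)) := hsublen
  · have hbd : Bornology.IsBounded (piMap lam0 lam1 '' cyl ω n) :=
      (Metric.isBounded_Icc _ _).subset hsub
    have hdist := Metric.dist_le_diam_of_mem hbd (right_endpoint_mem h0 h1 ω n)
      (left_endpoint_mem h0 h1 ω n)
    rw [Real.dist_eq, abs_of_nonneg (by linarith), hsublen] at hdist
    exact hdist

lemma lex_sep (hopen : Real.exp (-lam0) + Real.exp (-lam1) ≤ 1) : ∀ (d : ℕ) (σ τ : ℕ → Fin 2), (∀ k < d, σ k = τ k) → σ d = 0 → τ d = 1 →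
    prefixIter lam0 lam1 σ (d+1) 1 ≤ prefixIter lam0 lam1 τ (d+1) 0 := by
  intro d
  induction d with
  | zero =>
    intro σ τ _ hσ hτ
    show prefixIter lam0 lam1 σ 0 (fdig lam0 lam1 (σ 0) 1) ≤
      prefixIter lam0 lam1 τ 0 (fdig lam0 lam1 (τ 0) 0)
    rw [hσ, hτ]
    show fdig lam0 lam1 0 1 ≤ fdig lam0 lam1 1 0
    simp only [fdig, if_false, if_true]
    norm_num
    linarith [hopen]
  | succ d ih =>
    intro σ τ hagree hσ hτ
    have hsplitσ := prefixIter_split (lam0 := lam0) (lam1 := lam1) σ 1 (d+1) 1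
    have hsplitτ := prefixIter_split (lam0 := lam0) (lam1 := lam1) τ 1 (d+1) 0
    have h1d : 1 + (d+1) = d + 2 := by omega
    rw [h1d] at hsplitσ hsplitτ
    rw [hsplitσ, hsplitτ]
    have h00 : σ 0 = τ 0 := hagree 0 (by omega)
    have hih := ih (fun k => σ (1+k)) (fun k => τ (1+k))
      (fun k hk => hagree (1+k) (by omega))
      (by show σ (1+d) = 0; rw [Nat.add_comm 1 d]; exact hσ)
      (by show τ (1+d) = 1; rw [Nat.add_comm 1 d]; exact hτ)
    show prefixIter lam0 lam1 σ 1 _ ≤ prefixIter lam0 lam1 τ 1 _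
    have e1 : ∀ x, prefixIter lam0 lam1 σ 1 x = fdig lam0 lam1 (σ 0) x := fun x => rfl
    have e2 : ∀ x, prefixIter lam0 lam1 τ 1 x = fdig lam0 lam1 (τ 0) x := fun x => rfl
    rw [e1, e2, ← h00]
    have hmono : ∀ x y, x ≤ y → fdig lam0 lam1 (σ 0) x ≤ fdig lam0 lam1 (σ 0) y := by
      intro x y hxy
      have hs := fd_sub (lam0 := lam0) (lam1 := lam1) (σ 0) y x
      have := Real.exp_pos (-(if σ 0 = 1 then lam1 else lam0))
      nlinarith
    exact hmono _ _ hih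

lemma preimage_Icc_subset (h0 : 0 < lam0) (h1 : 0 < lam1) (hopen : Real.exp (-lam0) + Real.exp (-lam1) ≤ 1) (ω : ℕ → Fin 2) (n : ℕ) :
    piMap lam0 lam1 ⁻¹' (Set.Icc (prefixIter lam0 lam1 ω n 0) (prefixIter lam0 lam1 ω n 1)) ⊆
      cyl ω n ∪ piMap lam0 lam1 ⁻¹' {prefixIter lam0 lam1 ω n 0} ∪
        piMap lam0 lam1 ⁻¹' {prefixIter lam0 lam1 ω n 1} := by
  intro τ hτ
  rw [Set.mem_preimage, Set.mem_Icc] at hτ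
  by_cases hc : τ ∈ cyl ω n
  · exact Or.inl (Or.inl hc)
  · have hex : ∃ k, k < n ∧ τ k ≠ ω k := by
      by_contra h
      push_neg at h
      exact hc (fun k hk => h k hk)
    obtain ⟨k0, hk0n, hk0⟩ := hex
    have hfind : ∃ k, τ k ≠ ω k := ⟨k0, hk0⟩
    classical
    set d := Nat.find hfind with hd
    have hdne : τ d ≠ ω d := Nat.find_spec hfind
    have hdmin : ∀ j < d, τ j = ω j := fun j hj => by
      have := Nat.find_min hfind hj
      tauto
    have hdn : d < n := lt_of_le_of_lt (Nat.find_min' hfind hk0) hk0n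
    have hfin2 : ∀ a b : Fin 2, a ≠ b → (a = 0 ∧ b = 1) ∨ (a = 1 ∧ b = 0) := by decide
    obtain ⟨r, rfl⟩ : ∃ r, n = (d + 1) + r := ⟨n - (d+1), by omega⟩
    rcases hfin2 (τ d) (ω d) hdne with ⟨hτd, hωd⟩ | ⟨hτd, hωd⟩
    · -- τ d = 0, ω d = 1 : piMap τ = left endpoint
      refine Or.inl (Or.inr ?_)
      have key1 : prefixIter lam0 lam1 τ (d+1) 1 ≤ prefixIter lam0 lam1 ω (d+1) 0 :=
        lex_sep hopen d τ ω hdmin hτd hωd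
      have key2 : piMap lam0 lam1 τ ≤ prefixIter lam0 lam1 τ (d+1) 1 :=
        (piMap_mem h0 h1 τ (d+1)).2
      have key4 : prefixIter lam0 lam1 ω (d+1) 0 ≤ prefixIter lam0 lam1 ω ((d+1)+r) 0 := by
        rw [prefixIter_split (lam0 := lam0) (lam1 := lam1) ω (d+1) r 0]
        refine prefixIter_mono h0 h1 ω (d+1) ?_
        exact (prefixIter_mem h0 h1 _ r (by norm_num : (0:ℝ) ∈ Set.Icc (0:ℝ) 1)).1
      have : piMap lam0 lam1 τ = prefixIter lam0 lam1 ω ((d+1)+r) 0 := by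
        have := hτ.1
        linarith
      exact this
    · -- τ d = 1, ω d = 0 : piMap τ = right endpoint
      refine Or.inr ?_
      have key1 : prefixIter lam0 lam1 ω (d+1) 1 ≤ prefixIter lam0 lam1 τ (d+1) 0 :=
        lex_sep hopen d ω τ (fun k hk => (hdmin k hk).symm) hωd hτd
      have key2 : prefixIter lam0 lam1 τ (d+1) 0 ≤ piMap lam0 lam1 τ :=
        (piMap_mem h0 h1 τ (d+1)).1
      have key4 : prefixIter lam0 lam1 ω ((d+1)+r) 1 ≤ prefixIter lam0 lam1 ω (d+1) 1 := by
        rw [prefixIter_split (lam0 := lam0) (lam1 := lam1) ω (d+1) r 1]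
        refine prefixIter_mono h0 h1 ω (d+1) ?_
        exact (prefixIter_mem h0 h1 _ r (by norm_num : (1:ℝ) ∈ Set.Icc (0:ℝ) 1)).2
      have : piMap lam0 lam1 τ = prefixIter lam0 lam1 ω ((d+1)+r) 1 := by
        have := hτ.2
        linarith
      exact this

end withpos2
end Geometry

section Final
open scoped Topology
variable {lam0 lam1 p q : ℝ}

lemma lamSum_ge (h0 : 0 < lam0) (h1 : 0 < lam1) (ω : ℕ → Fin 2) (n : ℕ) :
    (n:ℝ) * min lam0 lam1 ≤ lamSum lam0 lam1 ω n := by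
  unfold lamSum
  calc (n:ℝ) * min lam0 lam1 = ∑ _k ∈ Finset.range n, min lam0 lam1 := by
        rw [Finset.sum_const, Finset.card_range, nsmul_eq_mul]
    _ ≤ ∑ k ∈ Finset.range n, (if ω k = 1 then lam1 else lam0) := by
        refine Finset.sum_le_sum (fun k _ => ?_)
        split_ifs
        · exact min_le_right _ _
        · exact min_le_left _ _

lemma piMap_continuous (h0 : 0 < lam0) (h1 : 0 < lam1) :
    Continuous (piMap lam0 lam1) := by
  rw [Metric.continuous_iff]
  intro σ ε hε
  set c := Real.exp (-(min lam0 lam1)) with hc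
  have hc0 : (0:ℝ) ≤ c := (Real.exp_pos _).le
  have hc1 : c < 1 := by
    rw [hc]
    calc Real.exp (-(min lam0 lam1)) < Real.exp 0 := by
          refine Real.exp_lt_exp.2 ?_
          have := lt_min h0 h1
          linarith
      _ = 1 := Real.exp_zero
  obtain ⟨n, hn⟩ := exists_pow_lt_of_lt_one hε hc1
  refine ⟨(1/2)^n, by positivity, fun τ hτ => ?_⟩
  have hagree : ∀ k < n, τ k = σ k := fun k hk =>
    PiNat.apply_eq_of_dist_lt hτ (le_of_lt hk)
  have hτmem : piMap lam0 lam1 τ ∈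
      Set.Icc (prefixIter lam0 lam1 σ n 0) (prefixIter lam0 lam1 σ n 1) :=
    piMap_mem_cyl h0 h1 hagree
  have hσmem := piMap_mem h0 h1 σ n
  have hlen : prefixIter lam0 lam1 σ n 1 - prefixIter lam0 lam1 σ n 0 =
      Real.exp (-(lamSum lam0 lam1 σ n)) := by rw [prefixIter_sub]; ring
  have hbound : Real.exp (-(lamSum lam0 lam1 σ n)) ≤ c^n := by
    have hcn : c ^ n = Real.exp ((n:ℝ) * (-(min lam0 lam1))) := by
      rw [hc, ← Real.exp_nat_mul]
    rw [hcn]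
    refine Real.exp_le_exp.2 ?_
    have := lamSum_ge h0 h1 σ n
    nlinarith
  rw [Real.dist_eq]
  have habs : |piMap lam0 lam1 τ - piMap lam0 lam1 σ| ≤
      Real.exp (-(lamSum lam0 lam1 σ n)) := by
    rw [abs_le]
    constructor <;> [linarith [hτmem.1, hσmem.2]; linarith [hτmem.2, hσmem.1]]
  linarith

lemma singleton_null (hp : p ∈ Set.Ioo (0:ℝ) 1) (hq : q ∈ Set.Ioo (0:ℝ) 1)
    (μ : Measure (ℕ → Fin 2))
    (hcyl : ∀ (ω : ℕ → Fin 2) (n : ℕ), 1 ≤ n → μ (cyl ω n) = ENNReal.ofReal (cylMass p q ω n))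
    (σ : ℕ → Fin 2) : μ {σ} = 0 := by
  set c := max (max p (1-p)) (max q (1-q)) with hcdef
  have hc1 : c < 1 := by
    rw [hcdef]
    refine max_lt (max_lt hp.2 (by linarith [hp.1])) (max_lt hq.2 (by linarith [hq.1]))
  have hc0 : (0:ℝ) ≤ c := le_trans hp.1.le (le_trans (le_max_left _ _) (le_max_left _ _))
  have hmass : ∀ n, cylMass p q σ n ≤ c^n := by
    intro n
    rw [cylMass_eq_prod]
    have hstep : ∏ j ∈ Finset.range n, Ffac p q j σ ≤ ∏ _j ∈ Finset.range n, c := by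
      refine Finset.prod_le_prod (fun j _ => Ffac_nonneg hp hq j σ) (fun j _ => ?_)
      rcases Ffac_cases (p := p) (q := q) j σ with h|h|h|h <;> rw [h, hcdef]
      · exact le_trans (le_max_left _ _) (le_max_left _ _)
      · exact le_trans (le_max_right _ _) (le_max_left _ _)
      · exact le_trans (le_max_left _ _) (le_max_right _ _)
      · exact le_trans (le_max_right _ _) (le_max_right _ _)
    have hconst : (∏ _j ∈ Finset.range n, c) = c^n := by
      rw [Finset.prod_const, Finset.card_range]
    rw [← hconst]
    exact hstep
  have hb : ∀ n, 1 ≤ n → μ {σ} ≤ ENNReal.ofReal (c^n) := by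
    intro n hn
    calc μ {σ} ≤ μ (cyl σ n) := measure_mono (by rintro τ rfl; exact fun k _ => rfl)
      _ = ENNReal.ofReal (cylMass p q σ n) := hcyl σ n hn
      _ ≤ ENNReal.ofReal (c^n) := ENNReal.ofReal_le_ofReal (hmass n)
  have htend : Tendsto (fun n : ℕ => ENNReal.ofReal (c^n)) atTop (𝓝 0) := by
    have hr := tendsto_pow_atTop_nhds_zero_of_lt_one hc0 hc1
    have h2 := ENNReal.tendsto_ofReal hr
    rwa [ENNReal.ofReal_zero] at h2
  refine le_antisymm ?_ (zero_le)
  exact ge_of_tendsto htend (Filter.eventually_atTop.2 ⟨1, hb⟩)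

lemma pair_key (h0 : 0 < lam0) (h1 : 0 < lam1)
    (hopen : Real.exp (-lam0) + Real.exp (-lam1) ≤ 1)
    {σ τ : ℕ → Fin 2} (heq : piMap lam0 lam1 σ = piMap lam0 lam1 τ)
    {d : ℕ} (hmin : ∀ k < d, σ k = τ k) (hσ : σ d = 0) (hτ : τ d = 1) :
    ∀ m, d < m → piMap lam0 lam1 σ = prefixIter lam0 lam1 σ m 1 ∧
      piMap lam0 lam1 τ = prefixIter lam0 lam1 τ m 0 := by
  intro m hm
  obtain ⟨r, rfl⟩ : ∃ r, m = (d+1) + r := ⟨m - (d+1), by omega⟩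
  have key1 := lex_sep hopen d σ τ hmin hσ hτ
  have l1 : piMap lam0 lam1 σ ≤ prefixIter lam0 lam1 σ ((d+1)+r) 1 :=
    (piMap_mem h0 h1 σ ((d+1)+r)).2
  have l4 : prefixIter lam0 lam1 σ ((d+1)+r) 1 ≤ prefixIter lam0 lam1 σ (d+1) 1 := by
    rw [prefixIter_split (lam0 := lam0) (lam1 := lam1) σ (d+1) r 1]
    exact prefixIter_mono h0 h1 σ (d+1)
      (prefixIter_mem h0 h1 _ r (by norm_num : (1:ℝ) ∈ Set.Icc (0:ℝ) 1)).2
  have l5 : prefixIter lam0 lam1 τ (d+1) 0 ≤ prefixIter lam0 lam1 τ ((d+1)+r) 0 := by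
    rw [prefixIter_split (lam0 := lam0) (lam1 := lam1) τ (d+1) r 0]
    exact prefixIter_mono h0 h1 τ (d+1)
      (prefixIter_mem h0 h1 _ r (by norm_num : (0:ℝ) ∈ Set.Icc (0:ℝ) 1)).1
  have l6 : prefixIter lam0 lam1 τ ((d+1)+r) 0 ≤ piMap lam0 lam1 τ :=
    (piMap_mem h0 h1 τ ((d+1)+r)).1
  constructor <;> linarith

lemma first_diff {σ τ : ℕ → Fin 2} (hne : σ ≠ τ) :
    ∃ d, (∀ k < d, σ k = τ k) ∧ σ d ≠ τ d := by
  classical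
  have hex : ∃ k, σ k ≠ τ k := by
    by_contra h
    push_neg at h
    exact hne (funext h)
  refine ⟨Nat.find hex, fun k hk => ?_, Nat.find_spec hex⟩
  have := Nat.find_min hex hk
  tauto

lemma fiber_two (h0 : 0 < lam0) (h1 : 0 < lam1)
    (hopen : Real.exp (-lam0) + Real.exp (-lam1) ≤ 1) (x : ℝ)
    (σ τ ρ : ℕ → Fin 2) (hσ : piMap lam0 lam1 σ = x) (hτ : piMap lam0 lam1 τ = x)
    (hρ : piMap lam0 lam1 ρ = x) : σ = τ ∨ σ = ρ ∨ τ = ρ := by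
  by_contra hcon
  push_neg at hcon
  obtain ⟨h12, h13, h23⟩ := hcon
  have hfin2 : ∀ a b : Fin 2, a ≠ b → (a = 0 ∧ b = 1) ∨ (a = 1 ∧ b = 0) := by decide
  obtain ⟨d12, hm12, hne12⟩ := first_diff h12
  obtain ⟨d13, hm13, hne13⟩ := first_diff h13
  obtain ⟨d23, hm23, hne23⟩ := first_diff h23
  set m := d12 + d13 + d23 + 1 with hm
  have hx : ∀ ξ : ℕ → Fin 2, piMap lam0 lam1 ξ = x →
      ¬(x = prefixIter lam0 lam1 ξ m 1 ∧ x = prefixIter lam0 lam1 ξ m 0) := by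
    rintro ξ _ ⟨e1, e2⟩
    have hsub := prefixIter_sub (lam0 := lam0) (lam1 := lam1) ξ m 1 0
    have := Real.exp_pos (-(lamSum lam0 lam1 ξ m))
    rw [← e1, ← e2] at hsub
    nlinarith
  have pair : ∀ (α β : ℕ → Fin 2) (dd : ℕ), piMap lam0 lam1 α = x → piMap lam0 lam1 β = x →
      (∀ k < dd, α k = β k) → α dd ≠ β dd → dd < m →
      (x = prefixIter lam0 lam1 α m 1 ∧ x = prefixIter lam0 lam1 β m 0) ∨
      (x = prefixIter lam0 lam1 β m 1 ∧ x = prefixIter lam0 lam1 α m 0) := by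
    intro α β dd hα hβ hmind hned hdm
    rcases hfin2 _ _ hned with ⟨ha, hb⟩ | ⟨ha, hb⟩
    · left
      have := pair_key h0 h1 hopen (by rw [hα, hβ]) hmind ha hb m hdm
      rw [hα] at this
      rw [hβ] at this
      exact this
    · right
      have := pair_key h0 h1 hopen (σ := β) (τ := α) (by rw [hβ, hα])
        (fun k hk => (hmind k hk).symm) hb ha m hdm
      rw [hα] at this
      rw [hβ] at this
      exact ⟨this.1, this.2⟩
  have hP12 := pair σ τ d12 hσ hτ hm12 hne12 (by omega)
  have hP13 := pair σ ρ d13 hσ hρ hm13 hne13 (by omega)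
  have hP23 := pair τ ρ d23 hτ hρ hm23 hne23 (by omega)
  rcases hP12 with ⟨a1, a2⟩ | ⟨a1, a2⟩ <;> rcases hP13 with ⟨b1, b2⟩ | ⟨b1, b2⟩ <;>
    rcases hP23 with ⟨c1, c2⟩ | ⟨c1, c2⟩ <;>
    first
      | exact hx σ hσ ⟨by assumption, by assumption⟩
      | exact hx τ hτ ⟨by assumption, by assumption⟩
      | exact hx ρ hρ ⟨by assumption, by assumption⟩

lemma fiber_null (hp : p ∈ Set.Ioo (0:ℝ) 1) (hq : q ∈ Set.Ioo (0:ℝ) 1)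
    (h0 : 0 < lam0) (h1 : 0 < lam1)
    (hopen : Real.exp (-lam0) + Real.exp (-lam1) ≤ 1)
    (μ : Measure (ℕ → Fin 2))
    (hcyl : ∀ (ω : ℕ → Fin 2) (n : ℕ), 1 ≤ n → μ (cyl ω n) = ENNReal.ofReal (cylMass p q ω n))
    (x : ℝ) : μ (piMap lam0 lam1 ⁻¹' {x}) = 0 := by
  classical
  by_cases h1e : ∃ σ, piMap lam0 lam1 σ = x
  · obtain ⟨σ, hσ⟩ := h1e
    by_cases h2e : ∃ τ, piMap lam0 lam1 τ = x ∧ τ ≠ σ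
    · obtain ⟨τ, hτ, hτσ⟩ := h2e
      have hsub : piMap lam0 lam1 ⁻¹' {x} ⊆ {σ, τ} := by
        intro ρ hρ
        rw [Set.mem_preimage, Set.mem_singleton_iff] at hρ
        rcases fiber_two h0 h1 hopen x σ τ ρ hσ hτ hρ with h | h | h
        · exact absurd h.symm hτσ
        · exact Or.inl h.symm
        · exact Or.inr h.symm
      refine le_antisymm ?_ (zero_le)
      calc μ (piMap lam0 lam1 ⁻¹' {x}) ≤ μ ({σ} ∪ {τ}) := by
            refine measure_mono ?_
            rwa [Set.singleton_union]
        _ ≤ μ {σ} + μ {τ} := measure_union_le _ _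
        _ = 0 := by rw [singleton_null hp hq μ hcyl, singleton_null hp hq μ hcyl, add_zero]
    · push_neg at h2e
      have hsub : piMap lam0 lam1 ⁻¹' {x} ⊆ {σ} := by
        intro ρ hρ
        rw [Set.mem_preimage, Set.mem_singleton_iff] at hρ
        exact h2e ρ hρ
      refine le_antisymm ?_ (zero_le)
      calc μ (piMap lam0 lam1 ⁻¹' {x}) ≤ μ {σ} := measure_mono hsub
        _ = 0 := singleton_null hp hq μ hcyl σ
  · push_neg at h1e
    have : piMap lam0 lam1 ⁻¹' {x} = ∅ := by
      ext ρ
      simp only [Set.mem_preimage, Set.mem_singleton_iff, Set.mem_empty_iff_false, iff_false]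
      exact h1e ρ
    rw [this, measure_empty]

lemma nu_image (hp : p ∈ Set.Ioo (0:ℝ) 1) (hq : q ∈ Set.Ioo (0:ℝ) 1)
    (h0 : 0 < lam0) (h1 : 0 < lam1)
    (hopen : Real.exp (-lam0) + Real.exp (-lam1) ≤ 1)
    (μ : Measure (ℕ → Fin 2))
    (hcyl : ∀ (ω : ℕ → Fin 2) (n : ℕ), 1 ≤ n → μ (cyl ω n) = ENNReal.ofReal (cylMass p q ω n))
    (ω : ℕ → Fin 2) (n : ℕ) (hn : 1 ≤ n) :
    (μ.map (piMap lam0 lam1)) (piMap lam0 lam1 '' cyl ω n) =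
      ENNReal.ofReal (cylMass p q ω n) := by
  have hmeas : Measurable (piMap lam0 lam1) := (piMap_continuous h0 h1).measurable
  apply le_antisymm
  · calc (μ.map (piMap lam0 lam1)) (piMap lam0 lam1 '' cyl ω n)
        ≤ (μ.map (piMap lam0 lam1))
            (Set.Icc (prefixIter lam0 lam1 ω n 0) (prefixIter lam0 lam1 ω n 1)) :=
          measure_mono (image_subset_Icc h0 h1 ω n)
      _ = μ (piMap lam0 lam1 ⁻¹'
            (Set.Icc (prefixIter lam0 lam1 ω n 0) (prefixIter lam0 lam1 ω n 1))) :=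
          Measure.map_apply hmeas measurableSet_Icc
      _ ≤ μ (cyl ω n ∪ piMap lam0 lam1 ⁻¹' {prefixIter lam0 lam1 ω n 0} ∪
            piMap lam0 lam1 ⁻¹' {prefixIter lam0 lam1 ω n 1}) :=
          measure_mono (preimage_Icc_subset h0 h1 hopen ω n)
      _ ≤ μ (cyl ω n ∪ piMap lam0 lam1 ⁻¹' {prefixIter lam0 lam1 ω n 0}) +
            μ (piMap lam0 lam1 ⁻¹' {prefixIter lam0 lam1 ω n 1}) := measure_union_le _ _
      _ ≤ (μ (cyl ω n) + μ (piMap lam0 lam1 ⁻¹' {prefixIter lam0 lam1 ω n 0})) +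
            μ (piMap lam0 lam1 ⁻¹' {prefixIter lam0 lam1 ω n 1}) :=
          add_le_add_left (measure_union_le _ _) _
      _ = μ (cyl ω n) := by
          rw [fiber_null hp hq h0 h1 hopen μ hcyl, fiber_null hp hq h0 h1 hopen μ hcyl,
            add_zero, add_zero]
      _ = ENNReal.ofReal (cylMass p q ω n) := hcyl ω n hn
  · rw [measure_eq_iInf]
    refine le_iInf fun t => le_iInf fun hst => le_iInf fun hmt => ?_
    rw [Measure.map_apply hmeas hmt, ← hcyl ω n hn]
    refine measure_mono (fun σ hσ => ?_)
    exact hst (Set.mem_image_of_mem _ hσ)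

end Final

/-- If `μ = μ_{p,q}` with `p, q ∈ (0,1)` and `ν_{p,q} = π_* μ_{p,q}`, then for `μ`-a.e. `ω`,
`log ν_{p,q}(π(C_n(ω))) / log diam π(C_n(ω)) → ((2-q)H(p) + pH(q)) / (2pλ₁ + (2-p-q)λ₀)`. -/
theorem stmt8 (lam0 lam1 : ℝ) (h0 : 0 < lam0) (h1 : 0 < lam1)
    (hopen : Real.exp (-lam0) + Real.exp (-lam1) ≤ 1)
    (p q : ℝ) (hp : p ∈ Set.Ioo (0 : ℝ) 1) (hq : q ∈ Set.Ioo (0 : ℝ) 1)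
    (μ : Measure (ℕ → Fin 2)) (hμ : IsProbabilityMeasure μ)
    (hcyl : ∀ (ω : ℕ → Fin 2) (n : ℕ), 1 ≤ n →
      μ (cyl ω n) = ENNReal.ofReal (cylMass p q ω n)) :
    ∀ᵐ ω ∂μ, Tendsto (fun n : ℕ =>
        Real.log ((μ.map (piMap lam0 lam1) (piMap lam0 lam1 '' cyl ω n)).toReal) /
          Real.log (Metric.diam (piMap lam0 lam1 '' cyl ω n)))
      atTop (nhds (((2 - q) * Hent p + p * Hent q) /
        (2 * p * lam1 + (2 - p - q) * lam0))) := by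
  have hden : (0:ℝ) < 2 - (q - p) := by
    have := hq.2; have := hp.1; linarith
  have hD : (0:ℝ) < 2*p*lam1 + (2-p-q)*lam0 := by
    have hpq : (0:ℝ) < 2 - p - q := by have := hp.2; have := hq.2; linarith
    nlinarith [mul_pos hp.1 h1, mul_pos hpq h0]
  have hχeq : lam0 + (lam1-lam0) * (2*p/(2-(q-p))) =
      (2*p*lam1 + (2-p-q)*lam0)/(2-(q-p)) := by
    field_simp
    ring
  have hχpos : (0:ℝ) < lam0 + (lam1-lam0) * (2*p/(2-(q-p))) := by
    rw [hχeq]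
    exact div_pos hD hden
  have hfinal_eq : (((-Hent p) + ((-Hent p) + ((-Hent q) - (-Hent p)) * (2*p/(2-(q-p)))))/2) /
      (-(lam0 + (lam1-lam0) * (2*p/(2-(q-p))))) =
      ((2 - q) * Hent p + p * Hent q) / (2 * p * lam1 + (2 - p - q) * lam0) := by
    rw [div_eq_div_iff (neg_ne_zero.2 hχpos.ne') hD.ne']
    field_simp
    ring
  have hae1 := slln_lam hp hq μ hcyl lam0 lam1
  have hae2 := slln_logmass hp hq μ hcyl
  filter_upwards [hae1, hae2] with ω h1ω h2ω
  have hdiv : Tendsto (fun n : ℕ => ((Real.log (cylMass p q ω n))/(n:ℝ)) /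
      (-((lamSum lam0 lam1 ω n)/(n:ℝ)))) atTop
      (𝓝 ((((-Hent p) + ((-Hent p) + ((-Hent q) - (-Hent p)) * (2*p/(2-(q-p)))))/2) /
        (-(lam0 + (lam1-lam0) * (2*p/(2-(q-p))))))) := by
    refine Tendsto.div h2ω (h1ω.neg) (neg_ne_zero.2 hχpos.ne')
  rw [hfinal_eq] at hdiv
  refine hdiv.congr' ?_
  filter_upwards [Filter.eventually_ge_atTop 1] with n hn
  have hν := nu_image hp hq h0 h1 hopen μ hcyl ω n hn
  have hd := diam_image h0 h1 ω n
  rw [hν, ENNReal.toReal_ofReal (cylMass_nonneg hp hq ω n), hd, Real.log_exp]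
  have hn0 : (n:ℝ) ≠ 0 := by
    have : (0:ℝ) < (n:ℝ) := by exact_mod_cast Nat.pos_of_ne_zero (by omega)
    exact this.ne'
  by_cases hS : lamSum lam0 lam1 ω n = 0
  · rw [hS]
    simp
  · field_simp
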